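/- arXiv:1908.01701 — 4 statements merged into one kernel-verified Lean document; each statement's English description precedes it below -/
import Mathlib

section
/- Let Λ be a self-dual hermitian O_F-lattice of rank n (over an unramified quadratic extension F/F_0), let W ⊂ Λ ⊗ F be an F-subspace of dimension n−1, and set M^♭ = W ∩ Λ. Then the type of M^♭ is at most 1, i.e., the quotient (M^♭)^∨/M^♭ is a cyclic O_F-module, where the dual is taken inside W. -/
noncomputable section

open Polynomial

variable {F : Type*} [Field F] {O : Type*} [CommRing O] [Algebra O F]
variable {V : Type*} [AddCommGroup V] [Module F V] [Module O V] [IsScalarTower O F V]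

/-- A hermitian form on `V` relative to the involution `σ` of `F`
(linear in the first variable, `σ`-conjugate-symmetric). -/
structure IsHermitianForm (σ : F ≃+* F) (B : V → V → F) : Prop where
  add_left : ∀ x y z : V, B (x + y) z = B x z + B y z
  smul_left : ∀ (c : F) (x y : V), B (c • x) y = c * B x y
  conj_symm : ∀ x y : V, B x y = σ (B y x)

theorem IsHermitianForm.zero_left {σ : F ≃+* F} {B : V → V → F}
    (hB : IsHermitianForm σ B) (y : V) : B 0 y = 0 := by
  have h := hB.add_left 0 0 y
  rw [add_zero] at h
  exact (left_eq_add.mp h)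

/-- An `O`-lattice is integral if the hermitian form takes values in (the image of) `O` on it. -/
def IsIntegralLat (B : V → V → F) (L : Submodule O V) : Prop :=
  ∀ x ∈ L, ∀ y ∈ L, B x y ∈ (algebraMap O F).range

/-- The dual lattice of `L` taken inside the `F`-subspace `W`:
all `x ∈ W` pairing integrally with `L`. -/
def dualLat (σ : F ≃+* F) (B : V → V → F) (hB : IsHermitianForm σ B)
    (W : Submodule F V) (L : Submodule O V) : Submodule O V where
  carrier := {x | x ∈ W ∧ ∀ y ∈ L, B x y ∈ (algebraMap O F).range}
  add_mem' := by
    rintro a b ⟨haW, ha⟩ ⟨hbW, hb⟩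
    refine ⟨W.add_mem haW hbW, fun y hy => ?_⟩
    rw [hB.add_left]
    exact Subring.add_mem _ (ha y hy) (hb y hy)
  zero_mem' := by
    refine ⟨W.zero_mem, fun y hy => ?_⟩
    rw [hB.zero_left]
    exact Subring.zero_mem _
  smul_mem' := by
    rintro c x ⟨hxW, hx⟩
    have hsm : (c : O) • x = (algebraMap O F c) • x := (algebraMap_smul F c x).symm
    refine ⟨?_, fun y hy => ?_⟩
    · show c • x ∈ W
      rw [hsm]; exact W.smul_mem _ hxW
    · show B (c • x) y ∈ _
      rw [hsm, hB.smul_left]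
      exact Subring.mul_mem _ ⟨c, rfl⟩ (hx y hy)

/-- `L` is an `O`-lattice generating the `F`-subspace `U`. -/
def IsLatIn (U : Submodule F V) (L : Submodule O V) : Prop :=
  L.FG ∧ Submodule.span F (L : Set V) = U

/-- Minimal number of generators of a submodule. -/
def minGen (O : Type*) [Semiring O] {M : Type*} [AddCommMonoid M] [Module O M]
    (N : Submodule O M) : ℕ :=
  sInf {n | ∃ s : Finset M, s.card = n ∧ Submodule.span O (s : Set M) = N}

/-- The type `t(L)` of a lattice `L` (relative to the subspace `W`): the minimal number of
generators of `L^∨/L`. -/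
def latType (σ : F ≃+* F) (B : V → V → F) (hB : IsHermitianForm σ B)
    (W : Submodule F V) (L : Submodule O V) : ℕ :=
  minGen O (Submodule.map L.mkQ (dualLat σ B hB W L))

/-- Length of a module: the longest strict chain of submodules. -/
def modLength (O : Type*) [Semiring O] (M : Type*) [AddCommMonoid M] [Module O M] : ℕ :=
  sSup {n | ∃ c : Fin (n + 1) → Submodule O M, StrictMono c}

/-- `ℓ(L'/L)`, the `O`-length of the quotient `L'/L`. -/
def quotLength (L L' : Submodule O V) : ℕ :=
  modLength O (Submodule.map L.mkQ L')

/-- `c = ϖ^v · unit`, i.e. `c` has valuation `v ∈ ℕ`. -/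
def HasValNat (ϖ : O) (c : F) (v : ℕ) : Prop :=
  ∃ u : Oˣ, c = algebraMap O F (ϖ ^ v * (u : O))

/-- `c = ϖ^v · unit` with `v ∈ ℤ`. -/
def HasValInt (ϖ : O) (c : F) (v : ℤ) : Prop :=
  ∃ u : Oˣ, c = (algebraMap O F ϖ) ^ v * algebraMap O F (u : O)

/-- The Cho–Yamauchi weight factor `m(t; X) = ∏_{i=0}^{t-1} (1 - (-q)^i X)`. -/
def cyWeight (q : ℕ) (t : ℕ) : Polynomial ℤ :=
  ∏ i ∈ Finset.range t, (1 - Polynomial.C ((-(q : ℤ)) ^ i) * Polynomial.X)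

/-- The derived weight factor `m(a) = ∏_{i=1}^{a-1}(1-(-q)^i)` for `a ≥ 1`, and `m(0) = 0`. -/
def mInt (q : ℕ) (a : ℕ) : ℤ :=
  if a = 0 then 0 else ∏ i ∈ Finset.Icc 1 (a - 1), (1 - (-(q : ℤ)) ^ i)

/-- The index set of the Cho–Yamauchi formula: integral lattices `L'` with
`L ⊆ L' ⊆ L ⊗ F`. -/
def cyLatSet (B : V → V → F) (L : Submodule O V) : Set (Submodule O V) :=
  {L' | L ≤ L' ∧ (L' : Set V) ⊆ (Submodule.span F (L : Set V) : Set V) ∧ IsIntegralLat B L'}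

/-- The normalized local Siegel series `Den(X, L)`, defined via the Cho–Yamauchi formula
`Den(X,L) = ∑_{L ⊆ L' ⊆ L'^∨} X^{2 ℓ(L'/L)} · m(t(L'); X)`. -/
def denPoly (q : ℕ) (σ : F ≃+* F) (B : V → V → F) (hB : IsHermitianForm σ B)
    (L : Submodule O V) (hfin : (cyLatSet B L).Finite) : Polynomial ℤ :=
  ∑ L' ∈ hfin.toFinset,
    Polynomial.X ^ (2 * quotLength L L') *
      cyWeight q (latType σ B hB (Submodule.span F (L : Set V)) L')



theorem IsHermitianForm.zero_right' {σ : F ≃+* F} {B : V → V → F}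
    (hB : IsHermitianForm σ B) (x : V) : B x 0 = 0 := by
  rw [hB.conj_symm, hB.zero_left, map_zero]

theorem IsHermitianForm.add_right' {σ : F ≃+* F} {B : V → V → F}
    (hB : IsHermitianForm σ B) (x y z : V) : B x (y + z) = B x y + B x z := by
  rw [hB.conj_symm x (y + z), hB.add_left, map_add, ← hB.conj_symm, ← hB.conj_symm]

theorem IsHermitianForm.smul_right' {σ : F ≃+* F} {B : V → V → F}
    (hB : IsHermitianForm σ B) (c : F) (x y : V) : B x (c • y) = σ c * B x y := by
  rw [hB.conj_symm x (c • y), hB.smul_left, map_mul, ← hB.conj_symm]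

theorem IsHermitianForm.sub_left' {σ : F ≃+* F} {B : V → V → F}
    (hB : IsHermitianForm σ B) (x z y : V) : B (x - z) y = B x y - B z y := by
  have h1 : B (-z) y = -B z y := by
    have := hB.smul_left (-1 : F) z y
    rw [neg_one_smul] at this
    rw [this]; ring
  rw [sub_eq_add_neg, hB.add_left, h1, sub_eq_add_neg]

theorem mem_dualLat' {σ : F ≃+* F} {B : V → V → F} {hB : IsHermitianForm σ B}
    {W : Submodule F V} {L : Submodule O V} {x : V} :
    x ∈ dualLat σ B hB W L ↔ x ∈ W ∧ ∀ y ∈ L, B x y ∈ (algebraMap O F).range := Iff.rfl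

theorem fg_submodule_frac_cyclic' [IsDomain O] [IsDiscreteValuationRing O] [IsFractionRing O F]
    (N : Submodule O F) (h : N.FG) : ∃ a : F, N = Submodule.span O {a} := by
  classical
  have key : ∀ a b : F, a ∈ Submodule.span O ({b} : Set F) ∨
      b ∈ Submodule.span O ({a} : Set F) := by
    intro a b
    rcases eq_or_ne a 0 with rfl | ha
    · left; exact Submodule.zero_mem _
    rcases eq_or_ne b 0 with rfl | hb
    · right; exact Submodule.zero_mem _
    rcases ValuationRing.isInteger_or_isInteger O (a * b⁻¹) with ⟨c, hc⟩ | ⟨c, hc⟩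
    · left
      rw [Submodule.mem_span_singleton]
      exact ⟨c, by rw [Algebra.smul_def, hc, mul_assoc, inv_mul_cancel₀ hb, mul_one]⟩
    · right
      rw [Submodule.mem_span_singleton]
      refine ⟨c, ?_⟩
      rw [Algebra.smul_def, hc, mul_inv_rev, inv_inv]
      rw [mul_assoc, inv_mul_cancel₀ ha, mul_one]
  obtain ⟨s, rfl⟩ := h
  induction s using Finset.induction_on with
  | empty => exact ⟨0, by simp⟩
  | @insert x s hx ih =>
    obtain ⟨c, hc⟩ := ih
    rw [Finset.coe_insert, Submodule.span_insert, hc]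
    rcases key x c with h1 | h2
    · exact ⟨c, sup_eq_right.mpr (Submodule.span_le.mpr (by simpa using h1))⟩
    · exact ⟨x, sup_eq_left.mpr (Submodule.span_le.mpr (by simpa using h2))⟩

variable [IsDomain O] [IsDiscreteValuationRing O] [IsFractionRing O F]

/-- if `Λ` is a self-dual hermitian `O_F`-lattice of rank `n`, `W ⊂ Λ ⊗ F`
an `F`-subspace of dimension `n − 1`, and `M^♭ = W ∩ Λ`, then `t(M^♭) ≤ 1`, i.e. the
quotient `(M^♭)^∨/M^♭` (dual taken inside `W`) is a cyclic `O_F`-module. -/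
theorem type_le_one_of_selfdual_cap_hyperplane
    (σ : F ≃+* F) (hσ2 : ∀ c : F, σ (σ c) = c)
    (hσO : ∀ c : O, σ (algebraMap O F c) ∈ (algebraMap O F).range)
    (B : V → V → F) (hB : IsHermitianForm σ B)
    (q : ℕ) (hq1 : 1 < q) (hqodd : Odd q) (ϖ : O) (hϖ : Irreducible ϖ)
    (hres : Nat.card (O ⧸ Ideal.span {ϖ}) = q ^ 2)
    (hσϖ : σ (algebraMap O F ϖ) = algebraMap O F ϖ)
    [FiniteDimensional F V] (n : ℕ) (hn : 1 ≤ n) (hdim : Module.finrank F V = n)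
    (Λ : Submodule O V) (hΛ : IsLatIn (⊤ : Submodule F V) Λ)
    (hselfdual : dualLat σ B hB ⊤ Λ = Λ)
    (W : Submodule F V) (hWdim : Module.finrank F W = n - 1)
    (hWnd : ∀ x ∈ W, (∀ y ∈ W, B x y = 0) → x = 0) :
    latType σ B hB W (Submodule.restrictScalars O W ⊓ Λ) ≤ 1 := by
    classical
  set M : Submodule O V := Submodule.restrictScalars O W ⊓ Λ with hM
  have hΛfg : Λ.FG := hΛ.1
  have hΛspan : Submodule.span F (Λ : Set V) = ⊤ := hΛ.2
  have hint : ∀ x ∈ Λ, ∀ y ∈ Λ, B x y ∈ (algebraMap O F).range := by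
    intro x hx y hy
    rw [← hselfdual] at hx
    exact (mem_dualLat'.mp hx).2 y hy
  have hMW : ∀ x ∈ M, x ∈ W := fun x hx => (Submodule.mem_inf.mp hx).1
  have hMΛ : ∀ x ∈ M, x ∈ Λ := fun x hx => (Submodule.mem_inf.mp hx).2
  -- the radical of B is trivial
  have hrad : ∀ u : V, (∀ x ∈ Λ, B u x = 0) → u = 0 := by
    intro u hu
    by_contra hu0
    have hFu : ∀ c : F, c • u ∈ Λ := by
      intro c
      rw [← hselfdual]
      refine mem_dualLat'.mpr ⟨Submodule.mem_top, fun y hy => ?_⟩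
      rw [hB.smul_left, hu y hy, mul_zero]
      exact ⟨0, map_zero _⟩
    obtain ⟨g, hg⟩ : ∃ g : Module.Dual F V, g u ≠ 0 := by
      by_contra hg
      push_neg at hg
      exact hu0 ((Module.forall_dual_apply_eq_zero_iff F u).mp hg)
    have hmap : Submodule.map (g.restrictScalars O) Λ = ⊤ := by
      rw [eq_top_iff]
      rintro c -
      refine ⟨(c / g u) • u, hFu _, ?_⟩
      rw [LinearMap.restrictScalars_apply, map_smul, smul_eq_mul, div_mul_cancel₀ _ hg]
    haveI hfin : Module.Finite O F :=
      Module.finite_def.mpr (hmap ▸ hΛfg.map _)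
    have hϖi : IsIntegral O ((algebraMap O F ϖ)⁻¹) := IsIntegral.of_finite O _
    obtain ⟨y, hy⟩ := IsIntegrallyClosed.isIntegral_iff.mp hϖi
    have hϖ0 : algebraMap O F ϖ ≠ 0 :=
      (map_ne_zero_iff _ (IsFractionRing.injective O F)).mpr hϖ.ne_zero
    have h1 : algebraMap O F (ϖ * y) = 1 := by
      rw [map_mul, hy, mul_inv_cancel₀ hϖ0]
    have h2 : ϖ * y = 1 := IsFractionRing.injective O F (by rw [h1, map_one])
    exact hϖ.not_isUnit (IsUnit.of_mul_eq_one _ h2)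
  -- a nonzero vector orthogonal to W
  let k := Module.finrank F W
  let b : Module.Basis (Fin k) F ↥W := Module.finBasis F ↥W
  let T : V →ₗ[F] (Fin k → F) := LinearMap.pi fun i =>
    { toFun := fun x => B x (b i : V)
      map_add' := fun x y => hB.add_left x y _
      map_smul' := fun c x => hB.smul_left c x _ }
  have hkerT : 0 < Module.finrank F (LinearMap.ker T) := by
    have h1 := LinearMap.finrank_range_add_finrank_ker T
    have h2 : Module.finrank F (LinearMap.range T) ≤ k := by
      simpa [Module.finrank_fintype_fun_eq_card] using (LinearMap.range T).finrank_le
    have h3 : k = n - 1 := hWdim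
    rw [hdim] at h1
    omega
  obtain ⟨u0, hu0ker, hu0ne⟩ : ∃ u0 : V, u0 ∈ LinearMap.ker T ∧ u0 ≠ 0 := by
    obtain ⟨⟨u0, hm⟩, hne⟩ := Module.finrank_pos_iff_exists_ne_zero.mp hkerT
    exact ⟨u0, hm, fun h => hne (Subtype.ext h)⟩
  have huW : ∀ w ∈ W, B u0 w = 0 := by
    have hTi : ∀ i, B u0 (b i : V) = 0 := by
      intro i
      exact congrFun (LinearMap.mem_ker.mp hu0ker) i
    intro w hw
    have hrepr : (⟨w, hw⟩ : W) = ∑ i, b.repr ⟨w, hw⟩ i • b i := (b.sum_repr ⟨w, hw⟩).symm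
    have hw' : w = ∑ i, b.repr ⟨w, hw⟩ i • (b i : V) := by
      have h5 := congrArg (Submodule.subtype W) hrepr
      rw [map_sum] at h5
      simpa only [map_smul, Submodule.subtype_apply] using h5
    have hsum : B u0 (∑ i, b.repr ⟨w, hw⟩ i • (b i : V)) =
        ∑ i, B u0 (b.repr ⟨w, hw⟩ i • (b i : V)) :=
      map_sum (AddMonoidHom.mk' (fun y => B u0 y) (hB.add_right' u0)) _ Finset.univ
    rw [hw', hsum]
    refine Finset.sum_eq_zero fun i _ => ?_
    rw [hB.smul_right', hTi i, mul_zero]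
  have huWn : u0 ∉ W := fun h => hu0ne (hWnd u0 h (fun y hy => huW y hy))
  -- a functional with kernel W
  have hq1' : Module.finrank F (V ⧸ W) = 1 := by
    have := Submodule.finrank_quotient_add_finrank W
    rw [hdim, hWdim] at this
    omega
  let e : (V ⧸ W) ≃ₗ[F] F := LinearEquiv.ofFinrankEq _ _ (by rw [hq1', Module.finrank_self])
  let f : V →ₗ[F] F := e.toLinearMap ∘ₗ W.mkQ
  have hfker : ∀ x : V, f x = 0 ↔ x ∈ W := by
    intro x
    have hfx : f x = e (W.mkQ x) := rfl
    rw [hfx, LinearEquiv.map_eq_zero_iff, Submodule.mkQ_apply, Submodule.Quotient.mk_eq_zero]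
  -- a generator of Λ over M
  obtain ⟨a, haI⟩ := fg_submodule_frac_cyclic' (Submodule.map (f.restrictScalars O) Λ)
    (hΛfg.map _)
  have haII : a ∈ Submodule.map (f.restrictScalars O) Λ := by
    rw [haI]; exact Submodule.mem_span_singleton_self a
  obtain ⟨lam0, hlam0Λ, hflam0⟩ := Submodule.mem_map.mp haII
  have hdec : ∀ lam ∈ Λ, ∃ m ∈ M, ∃ c : O, lam = m + c • lam0 := by
    intro lam hlam
    have hfl : f lam ∈ Submodule.map (f.restrictScalars O) Λ := ⟨lam, hlam, rfl⟩
    rw [haI, Submodule.mem_span_singleton] at hfl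
    obtain ⟨c, hc⟩ := hfl
    refine ⟨lam - c • lam0, ?_, c, (sub_add_cancel lam (c • lam0)).symm⟩
    refine Submodule.mem_inf.mpr ⟨?_, Submodule.sub_mem _ hlam (Submodule.smul_mem _ _ hlam0Λ)⟩
    show lam - c • lam0 ∈ W
    rw [← hfker]
    have hsm : f (c • lam0) = c • f lam0 := map_smul (f.restrictScalars O) c lam0
    rw [map_sub, hsm]
    have hflam0' : f lam0 = a := hflam0
    rw [hflam0', hc, sub_self]
  have hBu0lam0 : B u0 lam0 ≠ 0 := by
    intro h0
    refine hu0ne (hrad u0 ?_)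
    intro x hx
    obtain ⟨m, hm, c, rfl⟩ := hdec x hx
    rw [hB.add_right', huW m (hMW m hm), ← algebraMap_smul F c lam0, hB.smul_right', h0,
      mul_zero, add_zero]
  -- decompose lam0 over W ⊕ F u0
  have hWlt : W < W ⊔ Submodule.span F {u0} := by
    refine lt_of_le_of_ne le_sup_left (fun h => ?_)
    have hmem : u0 ∈ W ⊔ Submodule.span F {u0} :=
      Submodule.mem_sup_right (Submodule.mem_span_singleton_self u0)
    rw [← h] at hmem
    exact huWn hmem
  have hWu : W ⊔ Submodule.span F {u0} = ⊤ := by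
    apply Submodule.eq_top_of_finrank_eq
    have h1 := Submodule.finrank_lt_finrank_of_lt hWlt
    have h2 := (W ⊔ Submodule.span F {u0}).finrank_le
    rw [hWdim] at h1
    rw [hdim] at h2 ⊢
    omega
  obtain ⟨w0, hw0W, z, hz, hlam0dec⟩ :=
    Submodule.mem_sup.mp (hWu ▸ (Submodule.mem_top : lam0 ∈ (⊤ : Submodule F V)))
  obtain ⟨t, rfl⟩ := Submodule.mem_span_singleton.mp hz
  -- the dual of M equals M ⊔ span {w0}
  have hw0D : w0 ∈ dualLat σ B hB W M := by
    refine mem_dualLat'.mpr ⟨hw0W, fun y hy => ?_⟩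
    have hB1 : B w0 y = B lam0 y - t * B u0 y := by
      rw [← hlam0dec, hB.add_left, hB.smul_left]; ring
    rw [hB1, huW y (hMW y hy), mul_zero, sub_zero]
    exact hint lam0 hlam0Λ y (hMΛ y hy)
  have hMD : M ≤ dualLat σ B hB W M := fun m hm =>
    mem_dualLat'.mpr ⟨hMW m hm, fun y hy => hint m (hMΛ m hm) y (hMΛ y hy)⟩
  have hDle : dualLat σ B hB W M ≤ M ⊔ Submodule.span O {w0} := by
    intro x hx
    obtain ⟨hxW, hxI⟩ := mem_dualLat'.mp hx
    set c : F := B x lam0 / B u0 lam0 with hcdef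
    have hyΛ : x - c • u0 ∈ Λ := by
      rw [← hselfdual]
      refine mem_dualLat'.mpr ⟨Submodule.mem_top, fun lam hlam => ?_⟩
      obtain ⟨m, hm, a', rfl⟩ := hdec lam hlam
      have hBy0 : B (x - c • u0) lam0 = 0 := by
        rw [hB.sub_left', hB.smul_left, hcdef, div_mul_cancel₀ _ hBu0lam0, sub_self]
      rw [hB.add_right', ← algebraMap_smul F a' lam0, hB.smul_right', hBy0, mul_zero, add_zero]
      rw [hB.sub_left', hB.smul_left, huW m (hMW m hm), mul_zero, sub_zero]
      exact hxI m hm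
    obtain ⟨m, hm, a', hxa⟩ := hdec _ hyΛ
    have h2 : a' • lam0 = (algebraMap O F a') • lam0 := (algebraMap_smul F a' lam0).symm
    have h3 : a' • w0 = (algebraMap O F a') • w0 := (algebraMap_smul F a' w0).symm
    have hcoef : x - (m + a' • w0) = (algebraMap O F a' * t + c) • u0 := by
      have h1 : x = m + a' • lam0 + c • u0 := by
        rw [← hxa]; abel
      rw [h1, h2, h3, ← hlam0dec]
      module
    have hcW : (algebraMap O F a' * t + c) • u0 ∈ W := by
      rw [← hcoef]
      refine Submodule.sub_mem W hxW (W.add_mem (hMW m hm) ?_)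
      rw [h3]
      exact W.smul_mem _ hw0W
    have hc0 : algebraMap O F a' * t + c = 0 := by
      by_contra hne
      refine huWn ?_
      have hsc := W.smul_mem (algebraMap O F a' * t + c)⁻¹ hcW
      rwa [smul_smul, inv_mul_cancel₀ hne, one_smul] at hsc
    have hx' : x = m + a' • w0 := by
      have h4 := hcoef
      rw [hc0, zero_smul, sub_eq_zero] at h4
      exact h4
    rw [hx']
    exact Submodule.add_mem _ (Submodule.mem_sup_left hm)
      (Submodule.mem_sup_right (Submodule.smul_mem _ _ (Submodule.mem_span_singleton_self w0)))
  have hDeq : dualLat σ B hB W M = M ⊔ Submodule.span O {w0} :=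
    le_antisymm hDle (sup_le hMD (Submodule.span_le.mpr (by simpa using hw0D)))
  -- conclude
  have hmap : Submodule.map M.mkQ (dualLat σ B hB W M) = Submodule.span O {M.mkQ w0} := by
    rw [hDeq, Submodule.map_sup]
    have h1 : Submodule.map M.mkQ M = ⊥ := by
      rw [eq_bot_iff]
      rintro _ ⟨y, hy, rfl⟩
      simpa [Submodule.mkQ_apply, Submodule.Quotient.mk_eq_zero] using hy
    have h2 : Submodule.map M.mkQ (Submodule.span O {w0}) = Submodule.span O {M.mkQ w0} := by
      rw [Submodule.map_span, Set.image_singleton]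
    rw [h1, h2, bot_sup_eq]
  unfold latType minGen
  apply Nat.sInf_le
  exact ⟨{M.mkQ w0}, Finset.card_singleton _, by rw [Finset.coe_singleton, ← hmap]⟩
end
end

section
/- Let V be a nondegenerate hermitian space of dimension n over F, let L'^♭ ⊂ W be an O_F-lattice of full rank n−1 in a nondegenerate hyperplane W = L^♭_F of V. Then the map u ↦ L'^♭ + ⟨u⟩ induces a bijection from the quotient set [(V/L'^♭) ∖ (W/L'^♭)]/O_F^× onto the set of rank-n O_F-lattices L' ⊂ V with L' ∩ W = L'^♭. -/
noncomputable section

open Polynomial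

variable {F : Type*} [Field F] {O : Type*} [CommRing O] [Algebra O F]
variable {V : Type*} [AddCommGroup V] [Module F V] [Module O V] [IsScalarTower O F V]

variable [IsDomain O] [IsDiscreteValuationRing O] [IsFractionRing O F]

open Module


private lemma span_pair_cyclic_aux (x y : F) : ∃ c : F,
    Submodule.span O ({x, y} : Set F) = Submodule.span O {c} := by
  have key : (∃ a : O, x = a • y) ∨ (∃ a : O, y = a • x) := by
    by_cases hy : y = 0
    · exact Or.inr ⟨0, by simp [hy]⟩
    by_cases hx : x = 0
    · exact Or.inl ⟨0, by simp [hx]⟩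
    rcases ValuationRing.isInteger_or_isInteger O (x * y⁻¹) with ⟨a, ha⟩ | ⟨a, ha⟩
    · refine Or.inl ⟨a, ?_⟩
      rw [Algebra.smul_def, ha, mul_assoc, inv_mul_cancel₀ hy, mul_one]
    · refine Or.inr ⟨a, ?_⟩
      rw [Algebra.smul_def, ha, mul_inv_rev, inv_inv, mul_assoc, inv_mul_cancel₀ hx, mul_one]
  rcases key with ⟨a, ha⟩ | ⟨a, ha⟩
  · refine ⟨y, le_antisymm (Submodule.span_le.mpr ?_) (Submodule.span_mono (by simp))⟩
    intro z hz
    rcases hz with h | h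
    · rw [h, ha]; exact Submodule.smul_mem _ a (Submodule.mem_span_singleton_self y)
    · rw [Set.mem_singleton_iff] at h; rw [h]; exact Submodule.mem_span_singleton_self y
  · refine ⟨x, le_antisymm (Submodule.span_le.mpr ?_) (Submodule.span_mono (by simp))⟩
    intro z hz
    rcases hz with h | h
    · rw [h]; exact Submodule.mem_span_singleton_self x
    · rw [Set.mem_singleton_iff] at h; rw [h, ha]
      exact Submodule.smul_mem _ a (Submodule.mem_span_singleton_self x)

private lemma fg_cyclic_aux (M : Submodule O F) (h : M.FG) : ∃ c : F, M = Submodule.span O {c} := by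
  obtain ⟨s, rfl⟩ := h
  classical
  induction s using Finset.induction with
  | empty => exact ⟨0, by simp⟩
  | @insert x s' hx ih =>
    obtain ⟨c, hc⟩ := ih
    obtain ⟨d, hd⟩ := span_pair_cyclic_aux (O := O) x c
    refine ⟨d, ?_⟩
    rw [Finset.coe_insert, Submodule.span_insert, hc, ← hd, Submodule.span_insert]


/-- for a rank `n−1` lattice `L'^♭` spanning a hyperplane `W` of the
`n`-dimensional space `V`, the map `u ↦ L'^♭ + ⟨u⟩` induces a bijection from
`[(V/L'^♭) ∖ (W/L'^♭)]/O_F^×` onto the set of rank-`n` lattices `L'` with `L' ∩ W = L'^♭`: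
it is well defined, surjective, and two vectors give the same lattice iff they agree up to
a unit and an element of `L'^♭`. -/
theorem lattice_extension_bijection
    [FiniteDimensional F V] (n : ℕ) (hn : 1 ≤ n) (hdim : Module.finrank F V = n)
    (W : Submodule F V) (hWdim : Module.finrank F W = n - 1)
    (Lb : Submodule O V) (hfg : Lb.FG)
    (hspan : Submodule.span F (Lb : Set V) = W) :
    (∀ u : V, u ∉ W →
        (Lb ⊔ Submodule.span O {u}).FG ∧
        Submodule.span F ((Lb ⊔ Submodule.span O {u} : Submodule O V) : Set V) = ⊤ ∧
        (Lb ⊔ Submodule.span O {u}) ⊓ Submodule.restrictScalars O W = Lb) ∧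
    (∀ L' : Submodule O V, L'.FG → Submodule.span F (L' : Set V) = ⊤ →
        L' ⊓ Submodule.restrictScalars O W = Lb →
        ∃ u : V, u ∉ W ∧ L' = Lb ⊔ Submodule.span O {u}) ∧
    (∀ u u' : V, u ∉ W → u' ∉ W →
        ((Lb ⊔ Submodule.span O {u} = Lb ⊔ Submodule.span O {u'}) ↔
          ∃ c : Oˣ, u' - (c : O) • u ∈ Lb)) := by
  have hLbW : Lb ≤ Submodule.restrictScalars O W := by
    intro x hx
    show x ∈ W
    rw [← hspan]
    exact Submodule.subset_span hx
  have hWne : W ≠ ⊤ := by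
    intro h
    rw [h, finrank_top] at hWdim
    omega
  -- nonzero vectors with nonzero O-scalar stay outside W unless in W
  have key_smul : ∀ (a : O) (v : V), a ≠ 0 → (a • v) ∈ W → v ∈ W := by
    intro a v ha hav
    have h0 : algebraMap O F a ≠ 0 := by
      simpa using (map_ne_zero_iff _ (IsFractionRing.injective O F)).mpr ha
    have : a • v = (algebraMap O F a) • v := (algebraMap_smul F a v).symm
    rw [this] at hav
    have := W.smul_mem (algebraMap O F a)⁻¹ hav
    rwa [smul_smul, inv_mul_cancel₀ h0, one_smul] at this
  refine ⟨?_, ?_, ?_⟩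
  · -- Part 1
    intro u hu
    refine ⟨Submodule.FG.sup hfg (Submodule.fg_span_singleton u), ?_, ?_⟩
    · -- span F = ⊤
      have h1 : W ⊔ Submodule.span F {u} = ⊤ := by
        apply Submodule.eq_top_of_finrank_eq
        have hlt : W < W ⊔ Submodule.span F {u} := by
          refine lt_of_le_of_ne le_sup_left fun h => hu ?_
          rw [h]
          exact Submodule.mem_sup_right (Submodule.mem_span_singleton_self u)
        have h2 := Submodule.finrank_lt_finrank_of_lt hlt
        have h3 := Submodule.finrank_le (W ⊔ Submodule.span F {u})
        omega
      rw [eq_top_iff, ← h1]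
      refine sup_le ?_ ?_
      · rw [← hspan]
        exact Submodule.span_mono (fun x hx =>
          (Submodule.mem_sup_left hx : x ∈ Lb ⊔ Submodule.span O {u}))
      · rw [Submodule.span_singleton_le_iff_mem]
        exact Submodule.subset_span
          (Submodule.mem_sup_right (Submodule.mem_span_singleton_self u))
    · -- intersection = Lb
      refine le_antisymm ?_ (le_inf le_sup_left hLbW)
      rintro x ⟨hx1, hx2⟩
      obtain ⟨b, hb, s, hs, rfl⟩ := Submodule.mem_sup.mp hx1
      obtain ⟨a, rfl⟩ := Submodule.mem_span_singleton.mp hs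
      rcases eq_or_ne a 0 with rfl | ha
      · simpa using hb
      · exfalso
        apply hu
        apply key_smul a u ha
        have hbW : b ∈ W := hLbW hb
        have : (b + a • u) ∈ W := hx2
        have := W.sub_mem this hbW
        simpa using this
  · -- Part 2
    intro L' hfg' hspan' hinf
    -- construct functional φ with kernel W
    have hq1 : finrank F (V ⧸ W) = 1 := by
      have := Submodule.finrank_quotient_add_finrank W
      rw [hdim, hWdim] at this
      omega
    obtain ⟨b⟩ := (finrank_eq_one_iff (Fin 1)).mp hq1
    let e : (V ⧸ W) ≃ₗ[F] F := b.repr ≪≫ₗ Finsupp.LinearEquiv.finsuppUnique F F (Fin 1)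
    let φ : V →ₗ[F] F := (e : (V ⧸ W) →ₗ[F] F) ∘ₗ W.mkQ
    have hker : ∀ v : V, φ v = 0 ↔ v ∈ W := by
      intro v
      simp only [φ, LinearMap.comp_apply, LinearEquiv.coe_coe]
      rw [LinearEquiv.map_eq_zero_iff, Submodule.mkQ_apply, Submodule.Quotient.mk_eq_zero]
    have hM : (Submodule.map (φ.restrictScalars O) L').FG := Submodule.FG.map _ hfg'
    obtain ⟨c, hc⟩ := fg_cyclic_aux (Submodule.map (φ.restrictScalars O) L') hM
    have hcM : c ∈ Submodule.map (φ.restrictScalars O) L' := by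
      rw [hc]; exact Submodule.mem_span_singleton_self c
    obtain ⟨u, huL, huc⟩ := hcM
    have hc0 : c ≠ 0 := by
      rintro rfl
      have : ∀ x ∈ L', φ x = 0 := by
        intro x hx
        have : φ x ∈ Submodule.map (φ.restrictScalars O) L' := ⟨x, hx, rfl⟩
        rw [hc] at this
        simpa using this
      have hle : (L' : Set V) ⊆ W := fun x hx => (hker x).mp (this x hx)
      have : (⊤ : Submodule F V) ≤ W := by
        rw [← hspan']
        exact Submodule.span_le.mpr hle
      exact hWne (top_le_iff.mp this)
    refine ⟨u, fun h => hc0 (huc ▸ (hker u).mpr h), ?_⟩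
    refine le_antisymm ?_ (sup_le (hinf ▸ inf_le_left)
      ((Submodule.span_singleton_le_iff_mem u L').mpr huL))
    intro x hx
    have : φ x ∈ Submodule.map (φ.restrictScalars O) L' := ⟨x, hx, rfl⟩
    rw [hc] at this
    obtain ⟨a, ha⟩ := Submodule.mem_span_singleton.mp this
    have huc' : φ u = c := huc
    have hxu : φ (x - a • u) = 0 := by
      have h1 : φ (a • u) = a • φ u := map_smul (φ.restrictScalars O) a u
      rw [map_sub, h1, huc', ← ha, sub_self]
    have hmem : x - a • u ∈ Lb := by
      rw [← hinf]
      exact ⟨L'.sub_mem hx (L'.smul_mem a huL), (hker _).mp hxu⟩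
    have : x = (x - a • u) + a • u := by abel
    rw [this]
    exact Submodule.add_mem _ (Submodule.mem_sup_left hmem)
      (Submodule.mem_sup_right (Submodule.smul_mem _ a (Submodule.mem_span_singleton_self u)))
  · -- Part 3
    intro u u' hu hu'
    constructor
    · intro h
      have h1 : u' ∈ Lb ⊔ Submodule.span O {u} := by
        rw [h]; exact Submodule.mem_sup_right (Submodule.mem_span_singleton_self u')
      have h2 : u ∈ Lb ⊔ Submodule.span O {u'} := by
        rw [← h]; exact Submodule.mem_sup_right (Submodule.mem_span_singleton_self u)
      obtain ⟨b, hb, s, hs, hbs⟩ := Submodule.mem_sup.mp h1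
      obtain ⟨a, rfl⟩ := Submodule.mem_span_singleton.mp hs
      obtain ⟨b', hb', s', hs', hbs'⟩ := Submodule.mem_sup.mp h2
      obtain ⟨a', rfl⟩ := Submodule.mem_span_singleton.mp hs'
      -- u' = b + a • u, u = b' + a' • u'
      have hcomb : (1 - a * a') • u' = b + a • b' := by
        have h5 : b' = u - a' • u' := by rw [← hbs']; abel
        have h6 : b = u' - a • u := by rw [← hbs]; abel
        rw [h5, h6, sub_smul, one_smul, mul_smul, smul_sub]
        abel
      have haa' : a * a' = 1 := by
        by_contra hne
        apply hu'
        apply key_smul (1 - a * a') u' (sub_ne_zero.mpr (Ne.symm hne))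
        rw [hcomb]
        exact W.add_mem (hLbW hb) ((Submodule.restrictScalars O W).smul_mem a (hLbW hb'))
      have hua : IsUnit a := IsUnit.of_mul_eq_one (a := a) a' haa'
      refine ⟨hua.unit, ?_⟩
      rw [hua.unit_spec]
      have : u' - a • u = b := by rw [← hbs]; abel
      rw [this]; exact hb
    · rintro ⟨c, hc⟩
      have hu'mem : u' ∈ Lb ⊔ Submodule.span O {u} := by
        have : u' = (u' - (c : O) • u) + (c : O) • u := by abel
        rw [this]
        exact Submodule.add_mem _ (Submodule.mem_sup_left hc)
          (Submodule.mem_sup_right (Submodule.smul_mem _ _ (Submodule.mem_span_singleton_self u)))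
      have humem : u ∈ Lb ⊔ Submodule.span O {u'} := by
        have h1 : u = ((c⁻¹ : Oˣ) : O) • u' - ((c⁻¹ : Oˣ) : O) • (u' - (c : O) • u) := by
          rw [← smul_sub, sub_sub_cancel, smul_smul, Units.inv_mul, one_smul]
        rw [h1]
        exact Submodule.sub_mem _
          (Submodule.mem_sup_right (Submodule.smul_mem _ _ (Submodule.mem_span_singleton_self u')))
          (Submodule.mem_sup_left (Lb.smul_mem _ hc))
      refine le_antisymm (sup_le le_sup_left ?_) (sup_le le_sup_left ?_)
      · exact (Submodule.span_singleton_le_iff_mem u _).mpr humem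
      · exact (Submodule.span_singleton_le_iff_mem u' _).mpr hu'mem
end
end

section
/- In SL_2(F) for F a non-archimedean local field with ring of integers O_F and uniformizer ϖ, the subgroups N(ϖ^{−1}O_F) = {upper unitriangular matrices with entry in ϖ^{−1}O_F} and N_−(O_F) = {lower unitriangular matrices with entry in O_F} together generate the whole group SL_2(F). -/
noncomputable section

/-- in `SL₂(F)` over a non-archimedean local field `F` (fraction field of a
discrete valuation ring `O` with uniformizer `ϖ`), the subgroups `N(ϖ⁻¹O_F)` of upper
unitriangular matrices with entry in `ϖ⁻¹O_F` and `N₋(O_F)` of lower unitriangular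
matrices with entry in `O_F` together generate `SL₂(F)`. -/
theorem sl2_generated_by_unipotents
    {F : Type*} [Field F] {O : Type*} [CommRing O] [IsDomain O] [IsDiscreteValuationRing O]
    [Algebra O F] [IsFractionRing O F]
    (ϖ : O) (hϖ : Irreducible ϖ) :
    Subgroup.closure
      ({g : Matrix.SpecialLinearGroup (Fin 2) F | ∃ b : F,
          algebraMap O F ϖ * b ∈ (algebraMap O F).range ∧
          (g : Matrix (Fin 2) (Fin 2) F) = !![1, b; 0, 1]} ∪
        {g : Matrix.SpecialLinearGroup (Fin 2) F | ∃ c : F,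
          c ∈ (algebraMap O F).range ∧
          (g : Matrix (Fin 2) (Fin 2) F) = !![1, 0; c, 1]}) = ⊤ := by
  set π : F := algebraMap O F ϖ with hπdef
  have hπ0 : π ≠ 0 := by
    simpa [hπdef, map_eq_zero_iff _ (IsFractionRing.injective O F)] using hϖ.ne_zero
  set S := ({g : Matrix.SpecialLinearGroup (Fin 2) F | ∃ b : F,
          algebraMap O F ϖ * b ∈ (algebraMap O F).range ∧
          (g : Matrix (Fin 2) (Fin 2) F) = !![1, b; 0, 1]} ∪
        {g : Matrix.SpecialLinearGroup (Fin 2) F | ∃ c : F,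
          c ∈ (algebraMap O F).range ∧
          (g : Matrix (Fin 2) (Fin 2) F) = !![1, 0; c, 1]}) with hS
  set H := Subgroup.closure S with hH
  -- elementary matrices
  let U : F → Matrix.SpecialLinearGroup (Fin 2) F := fun b =>
    ⟨!![1, b; 0, 1], by simp [Matrix.det_fin_two_of]⟩
  let L : F → Matrix.SpecialLinearGroup (Fin 2) F := fun c =>
    ⟨!![1, 0; c, 1], by simp [Matrix.det_fin_two_of]⟩
  have hUmem : ∀ b : F, π * b ∈ (algebraMap O F).range → U b ∈ H :=
    fun b hb => Subgroup.subset_closure (Or.inl ⟨b, hb, rfl⟩)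
  have hLmem : ∀ c : F, c ∈ (algebraMap O F).range → L c ∈ H :=
    fun c hc => Subgroup.subset_closure (Or.inr ⟨c, hc, rfl⟩)
  -- the Weyl-type element W a = !![0, a; -a⁻¹, 0]
  let W : ∀ a : F, a ≠ 0 → Matrix.SpecialLinearGroup (Fin 2) F := fun a ha =>
    ⟨!![0, a; -a⁻¹, 0], by rw [Matrix.det_fin_two_of]; field_simp; ring⟩
  -- diagonal D a = !![a, 0; 0, a⁻¹]
  let D : ∀ a : F, a ≠ 0 → Matrix.SpecialLinearGroup (Fin 2) F := fun a ha =>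
    ⟨!![a, 0; 0, a⁻¹], by rw [Matrix.det_fin_two_of]; field_simp; ring⟩
  have hW : ∀ (a : F) (ha : a ≠ 0), U a * L (-a⁻¹) * U a = W a ha := by
    intro a ha
    apply Subtype.ext
    push_cast [Matrix.SpecialLinearGroup.coe_mul]
    show (!![1,a;0,1] * !![1,0;-a⁻¹,1]) * !![1,a;0,1] = !![0, a; -a⁻¹, 0]
    ext i j
    fin_cases i <;> fin_cases j <;>
      simp [Matrix.mul_apply, Fin.sum_univ_two] <;> field_simp <;> simp
  have hDW : ∀ (a : F) (ha : a ≠ 0), D a ha * W 1 one_ne_zero = W a ha := by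
    intro a ha
    apply Subtype.ext
    push_cast [Matrix.SpecialLinearGroup.coe_mul]
    show !![a, 0; 0, a⁻¹] * !![0, 1; -1⁻¹, 0] = !![0, a; -a⁻¹, 0]
    ext i j
    fin_cases i <;> fin_cases j <;>
      simp [Matrix.mul_apply, Fin.sum_univ_two] <;> field_simp
  have hWmem : ∀ (a : F) (ha : a ≠ 0), U a ∈ H → L (-a⁻¹) ∈ H → W a ha ∈ H := by
    intro a ha h1 h2
    rw [← hW a ha]; exact mul_mem (mul_mem h1 h2) h1
  have hW1mem : W 1 one_ne_zero ∈ H := by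
    refine hWmem 1 one_ne_zero (hUmem 1 ?_) (hLmem _ ?_)
    · exact ⟨ϖ, by simp [hπdef]⟩
    · exact ⟨-1, by simp⟩
  have hDmem : ∀ (a : F) (ha : a ≠ 0), U a ∈ H → L (-a⁻¹) ∈ H → D a ha ∈ H := by
    intro a ha h1 h2
    have : D a ha = W a ha * (W 1 one_ne_zero)⁻¹ := by
      rw [eq_mul_inv_iff_mul_eq, hDW a ha]
    rw [this]; exact mul_mem (hWmem a ha h1 h2) (inv_mem hW1mem)
  -- the key diagonal element t = diag (π⁻¹, π)
  have hπinv : (π : F)⁻¹ ≠ 0 := inv_ne_zero hπ0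
  set t := D π⁻¹ hπinv with ht
  have htmem : t ∈ H := by
    refine hDmem π⁻¹ hπinv (hUmem π⁻¹ ?_) ?_
    · rw [mul_inv_cancel₀ hπ0]; exact ⟨1, by simp⟩
    · rw [inv_inv]
      exact hLmem _ ⟨-ϖ, by simp [hπdef]⟩
  -- conjugation by t
  have hconjU : ∀ b : F, t * U (π ^ 2 * b) = U b * t := by
    intro b
    apply Subtype.ext
    push_cast [Matrix.SpecialLinearGroup.coe_mul]
    show !![π⁻¹, 0; 0, π⁻¹⁻¹] * !![1, π ^ 2 * b; 0, 1]
        = !![1, b; 0, 1] * !![π⁻¹, 0; 0, π⁻¹⁻¹]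
    ext i j
    fin_cases i <;> fin_cases j <;>
      simp [Matrix.mul_apply, Fin.sum_univ_two] <;> (field_simp; try ring)
  have hconjL : ∀ c : F, L (π ^ 2 * c) * t = t * L c := by
    intro c
    apply Subtype.ext
    push_cast [Matrix.SpecialLinearGroup.coe_mul]
    show !![1, 0; π ^ 2 * c, 1] * !![π⁻¹, 0; 0, π⁻¹⁻¹]
        = !![π⁻¹, 0; 0, π⁻¹⁻¹] * !![1, 0; c, 1]
    ext i j
    fin_cases i <;> fin_cases j <;>
      simp [Matrix.mul_apply, Fin.sum_univ_two] <;> (field_simp; try ring)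
  -- all upper unipotents with bounded denominator
  have hUind : ∀ (n : ℕ) (b : F), π ^ n * b ∈ (algebraMap O F).range → U b ∈ H := by
    intro n
    induction n with
    | zero =>
      intro b hb
      rw [pow_zero, one_mul] at hb
      obtain ⟨x, hx⟩ := hb
      exact hUmem b ⟨ϖ * x, by rw [map_mul, hx, hπdef]⟩
    | succ n ih =>
      intro b hb
      have hb' : π ^ n * (π ^ 2 * b) ∈ (algebraMap O F).range := by
        obtain ⟨x, hx⟩ := hb
        refine ⟨ϖ * x, ?_⟩
        rw [map_mul, hx, hπdef]
        ring
      have : U b = t * U (π ^ 2 * b) * t⁻¹ := by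
        symm; rw [mul_inv_eq_iff_eq_mul]; exact hconjU b
      rw [this]
      exact mul_mem (mul_mem htmem (ih _ hb')) (inv_mem htmem)
  have hLind : ∀ (n : ℕ) (c : F), π ^ n * c ∈ (algebraMap O F).range → L c ∈ H := by
    intro n
    induction n with
    | zero =>
      intro c hc
      rw [pow_zero, one_mul] at hc
      exact hLmem c hc
    | succ n ih =>
      intro c hc
      have hc' : π ^ n * (π ^ 2 * c) ∈ (algebraMap O F).range := by
        obtain ⟨x, hx⟩ := hc
        refine ⟨ϖ * x, ?_⟩
        rw [map_mul, hx, hπdef]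
        ring
      have : L c = t⁻¹ * (L (π ^ 2 * c) * t) := by
        symm; rw [inv_mul_eq_iff_eq_mul]; exact hconjL c
      rw [this, ← mul_assoc]
      exact mul_mem (mul_mem (inv_mem htmem) (ih _ hc')) htmem
  -- every element of F has bounded denominator
  have hdenom : ∀ x : F, ∃ n : ℕ, π ^ n * x ∈ (algebraMap O F).range := by
    intro x
    obtain ⟨⟨y, hy⟩, z, hz⟩ := IsLocalization.exists_integer_multiple (nonZeroDivisors O) x
    have hy0 : y ≠ 0 := nonZeroDivisors.ne_zero hy
    obtain ⟨n, u, rfl⟩ := IsDiscreteValuationRing.eq_unit_mul_pow_irreducible hy0 hϖ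
    refine ⟨n, (u⁻¹ : Oˣ) * z, ?_⟩
    simp only [Algebra.smul_def] at hz
    have hz' : (algebraMap O F) z = (algebraMap O F) ((u : O) * ϖ ^ n) * x := hz
    rw [map_mul, map_pow, ← hπdef] at hz'
    have huu : (algebraMap O F) ((u⁻¹ : Oˣ) : O) * (algebraMap O F) ((u : Oˣ) : O) = 1 := by
      rw [← map_mul, ← Units.val_mul, inv_mul_cancel, Units.val_one, map_one]
    rw [map_mul, hz']
    linear_combination (π ^ n * x) * huu
  have hUall : ∀ b : F, U b ∈ H := fun b => by
    obtain ⟨n, hn⟩ := hdenom b; exact hUind n b hn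
  have hLall : ∀ c : F, L c ∈ H := fun c => by
    obtain ⟨n, hn⟩ := hdenom c; exact hLind n c hn
  have hWall : ∀ (a : F) (ha : a ≠ 0), W a ha ∈ H :=
    fun a ha => hWmem a ha (hUall a) (hLall _)
  have hDall : ∀ (a : F) (ha : a ≠ 0), D a ha ∈ H :=
    fun a ha => hDmem a ha (hUall a) (hLall _)
  -- now prove the generation
  rw [eq_top_iff]
  rintro g -
  set a := (g : Matrix (Fin 2) (Fin 2) F) 0 0 with hadef
  set b := (g : Matrix (Fin 2) (Fin 2) F) 0 1 with hbdef
  set c := (g : Matrix (Fin 2) (Fin 2) F) 1 0 with hcdef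
  set d := (g : Matrix (Fin 2) (Fin 2) F) 1 1 with hddef
  have hg : (g : Matrix (Fin 2) (Fin 2) F) = !![a, b; c, d] := Matrix.eta_fin_two _
  have hdet : a * d - b * c = 1 := by
    have := g.2
    rw [Matrix.det_fin_two] at this
    exact this
  by_cases hc : c = 0
  · -- upper triangular: g = D a * U (a⁻¹ * b)
    have ha : a ≠ 0 := by
      intro h; rw [h, hc] at hdet; simp at hdet
    have hd : d = a⁻¹ := by
      rw [hc] at hdet; field_simp at hdet ⊢; linear_combination hdet
    have : g = D a ha * U (a⁻¹ * b) := by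
      apply Subtype.ext
      push_cast [Matrix.SpecialLinearGroup.coe_mul]
      rw [hg]
      show !![a, b; c, d] = !![a, 0; 0, a⁻¹] * !![1, a⁻¹ * b; 0, 1]
      rw [hc, hd]
      ext i j
      fin_cases i <;> fin_cases j <;>
        simp [Matrix.mul_apply, Fin.sum_univ_two] <;> field_simp
    rw [this]
    exact mul_mem (hDall a ha) (hUall _)
  · -- Bruhat cell: g = U (a/c) * W (-c⁻¹) * U (d/c)
    have hcinv : (-c⁻¹ : F) ≠ 0 := by simpa using inv_ne_zero hc
    have : g = U (a / c) * W (-c⁻¹) hcinv * U (d / c) := by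
      apply Subtype.ext
      push_cast [Matrix.SpecialLinearGroup.coe_mul]
      rw [hg]
      show !![a, b; c, d] =
        (!![1, a / c; 0, 1] * !![0, -c⁻¹; -(-c⁻¹)⁻¹, 0]) * !![1, d / c; 0, 1]
      ext i j
      fin_cases i <;> fin_cases j <;>
        simp [Matrix.mul_apply, Fin.sum_univ_two] <;> field_simp <;>
        first
          | ring1
          | linear_combination hdet
          | linear_combination -hdet
          | linear_combination c * hdet
          | linear_combination -c * hdet
    rw [this]
    exact mul_mem (mul_mem (hUall _) (hWall _ hcinv)) (hUall _)
end
end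

section
/- Let L^♭ be an integral hermitian O_F-lattice of rank n−1 with fundamental invariants (a_1,…,a_{n−1}), and let x ∈ V ∖ L^♭_F. Let (a'_1,…,a'_n) be the fundamental invariants of L^♭ + ⟨x⟩. Then a'_1 + ⋯ + a'_{n−1} ≥ a_1 + ⋯ + a_{n−1} holds if and only if x ∈ M(L^♭), where M(L^♭) = L^♭ ⊕ ⟨u⟩ with u ⊥ L^♭ the lattice of all vectors orthogonal to L^♭_F of valuation ≥ a_{n−1}. -/
noncomputable section

open Polynomial

variable {F : Type*} [Field F] {O : Type*} [CommRing O] [Algebra O F]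
variable {V : Type*} [AddCommGroup V] [Module F V] [Module O V] [IsScalarTower O F V]

variable [IsDomain O] [IsDiscreteValuationRing O] [IsFractionRing O F]


namespace Statement16

variable {F : Type*} [Field F] {O : Type*} [CommRing O] [Algebra O F]
variable {V : Type*} [AddCommGroup V] [Module F V] [Module O V] [IsScalarTower O F V]

/-- `val(c) ≥ v` with respect to the uniformizer `ϖ`. -/
def LeVal (ϖ : O) (v : ℤ) (c : F) : Prop :=
  ∃ b : O, c = (algebraMap O F ϖ) ^ v * algebraMap O F b

section Val

variable {ϖ : O} {v w : ℤ} {c e : F}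

theorem leVal_zero (ϖ : O) (v : ℤ) : LeVal ϖ v (0 : F) := ⟨0, by simp⟩

theorem leVal_add (hc : LeVal ϖ v c) (he : LeVal ϖ v e) : LeVal ϖ v (c + e) := by
  obtain ⟨b, rfl⟩ := hc; obtain ⟨b', rfl⟩ := he
  exact ⟨b + b', by rw [map_add, mul_add]⟩

theorem leVal_neg (hc : LeVal ϖ v c) : LeVal ϖ v (-c) := by
  obtain ⟨b, rfl⟩ := hc
  exact ⟨-b, by rw [map_neg, mul_neg]⟩

theorem leVal_sum {ι : Type*} (s : Finset ι) (f : ι → F)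
    (h : ∀ i ∈ s, LeVal ϖ v (f i)) : LeVal ϖ v (∑ i ∈ s, f i) :=
  Finset.sum_induction f (LeVal ϖ v) (fun _ _ => leVal_add) (leVal_zero ϖ v) h

theorem leVal_of_mem (h : c ∈ (algebraMap O F).range) : LeVal ϖ 0 c := by
  obtain ⟨b, rfl⟩ := h
  exact ⟨b, by rw [zpow_zero, one_mul]⟩

theorem leVal_zero_mem (h : LeVal ϖ 0 c) : c ∈ (algebraMap O F).range := by
  obtain ⟨b, rfl⟩ := h
  exact ⟨b, by rw [zpow_zero, one_mul]⟩

theorem leVal_mul_mem (hc : LeVal ϖ v c) (he : e ∈ (algebraMap O F).range) :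
    LeVal ϖ v (c * e) := by
  obtain ⟨b, rfl⟩ := hc; obtain ⟨b', rfl⟩ := he
  exact ⟨b * b', by rw [map_mul]; ring⟩

theorem leVal_mem_mul (he : e ∈ (algebraMap O F).range) (hc : LeVal ϖ v c) :
    LeVal ϖ v (e * c) := by
  rw [mul_comm]; exact leVal_mul_mem hc he

variable (hπ : algebraMap O F ϖ ≠ 0)
include hπ

theorem leVal_mul (hc : LeVal ϖ v c) (he : LeVal ϖ w e) : LeVal ϖ (v + w) (c * e) := by
  obtain ⟨b, rfl⟩ := hc; obtain ⟨b', rfl⟩ := he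
  exact ⟨b * b', by rw [map_mul, zpow_add₀ hπ]; ring⟩

theorem leVal_mono (hwv : w ≤ v) (hc : LeVal ϖ v c) : LeVal ϖ w c := by
  obtain ⟨b, rfl⟩ := hc
  refine ⟨ϖ ^ (v - w).toNat * b, ?_⟩
  have h1 : v = w + ((v - w).toNat : ℤ) := by
    rw [Int.toNat_of_nonneg (sub_nonneg.2 hwv)]; ring
  have h2 : (algebraMap O F ϖ) ^ v
      = (algebraMap O F ϖ) ^ w * (algebraMap O F ϖ) ^ ((v - w).toNat) := by
    rw [← zpow_natCast (algebraMap O F ϖ) (v - w).toNat, ← zpow_add₀ hπ, ← h1]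
  rw [map_mul, map_pow, h2]; ring

omit hπ

theorem hasValInt_leVal (h : HasValInt ϖ c v) : LeVal ϖ v c := by
  obtain ⟨u, rfl⟩ := h; exact ⟨u, rfl⟩

theorem hasValNat_hasValInt {a : ℕ} (h : HasValNat ϖ c a) : HasValInt ϖ c (a : ℤ) := by
  obtain ⟨u, rfl⟩ := h
  exact ⟨u, by rw [map_mul, map_pow, zpow_natCast]⟩

include hπ

theorem hasValInt_ne_zero (h : HasValInt ϖ c v) : c ≠ 0 := by
  obtain ⟨u, rfl⟩ := h
  have h1 : algebraMap O F (u : O) ≠ 0 := ((Units.isUnit u).map (algebraMap O F)).ne_zero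
  exact mul_ne_zero (zpow_ne_zero v hπ) h1

theorem hasValInt_mul {c' : F} {v' : ℤ} (h : HasValInt ϖ c v) (h' : HasValInt ϖ c' v') :
    HasValInt ϖ (c * c') (v + v') := by
  obtain ⟨u, rfl⟩ := h; obtain ⟨u', rfl⟩ := h'
  exact ⟨u * u', by rw [Units.val_mul, map_mul, zpow_add₀ hπ]; ring⟩

theorem hasValInt_prod {ι : Type*} (s : Finset ι) (f : ι → F) (g : ι → ℤ)
    (h : ∀ i ∈ s, HasValInt ϖ (f i) (g i)) :
    HasValInt ϖ (∏ i ∈ s, f i) (∑ i ∈ s, g i) := by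
  classical
  induction s using Finset.induction_on with
  | empty => simpa using ⟨(1 : Oˣ), by simp⟩
  | insert _ _ hni ih =>
      rename_i i s
      rw [Finset.prod_insert hni, Finset.sum_insert hni]
      exact hasValInt_mul hπ (h i (Finset.mem_insert_self i s))
        (ih fun j hj => h j (Finset.mem_insert_of_mem hj))

theorem leVal_cancel {d : F} (h : HasValInt ϖ c v) (h2 : LeVal ϖ (v + w) (c * d)) :
    LeVal ϖ w d := by
  obtain ⟨u, hu⟩ := h
  obtain ⟨b, hb⟩ := h2
  have hc0 : c ≠ 0 := hasValInt_ne_zero hπ ⟨u, hu⟩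
  refine ⟨b * ↑u⁻¹, ?_⟩
  have key : c * d = c * ((algebraMap O F ϖ) ^ w * algebraMap O F (b * ↑u⁻¹)) := by
    rw [hb, hu, map_mul, zpow_add₀ hπ]
    have : algebraMap O F ↑u * algebraMap O F ↑u⁻¹ = 1 := by
      rw [← map_mul, Units.mul_inv, map_one]
    linear_combination (-(algebraMap O F ϖ ^ v * algebraMap O F ϖ ^ w * algebraMap O F b)) * this
  exact mul_left_cancel₀ hc0 key

theorem le_of_leVal (inj : Function.Injective (algebraMap O F)) (hϖ : Irreducible ϖ)
    (h1 : LeVal ϖ v c) (h2 : HasValInt ϖ c w) : v ≤ w := by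
  by_contra hlt
  push_neg at hlt
  obtain ⟨b, hb⟩ := h1
  obtain ⟨u, hu⟩ := h2
  set k := (v - w).toNat with hk
  have hk1 : 1 ≤ k := by omega
  have hvw : v = w + (k : ℤ) := by omega
  have heq : (algebraMap O F ϖ) ^ w * algebraMap O F (ϖ ^ k * b)
      = (algebraMap O F ϖ) ^ w * algebraMap O F (u : O) := by
    rw [map_mul, map_pow, ← mul_assoc, ← zpow_natCast (algebraMap O F ϖ) k,
      ← zpow_add₀ hπ, ← hvw, ← hb, hu]
  have heq2 : ϖ ^ k * b = (u : O) :=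
    inj (mul_left_cancel₀ (zpow_ne_zero w hπ) heq)
  have hdvd : ϖ ∣ (u : O) := by
    refine ⟨ϖ ^ (k - 1) * b, ?_⟩
    rw [← heq2, ← mul_assoc, ← pow_succ']
    congr 2
    omega
  exact hϖ.not_isUnit (isUnit_of_dvd_unit hdvd u.isUnit)

end Val

end Statement16

namespace Statement16

variable {F : Type*} [Field F] {O : Type*} [CommRing O] [Algebra O F]
variable {V : Type*} [AddCommGroup V] [Module F V] [Module O V] [IsScalarTower O F V]

section DVR

variable [IsDomain O] [IsDiscreteValuationRing O] [IsFractionRing O F]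

theorem hasValInt_div {ϖ : O} (hπ : algebraMap O F ϖ ≠ 0) {c d : F} {v w : ℤ}
    (h : HasValInt ϖ c v) (h' : HasValInt ϖ d w) : HasValInt ϖ (c / d) (v - w) := by
  obtain ⟨u, rfl⟩ := h; obtain ⟨u', rfl⟩ := h'
  have hu' : algebraMap O F ↑u' ≠ 0 := ((Units.isUnit u').map _).ne_zero
  have hd : (algebraMap O F ϖ) ^ w * algebraMap O F ↑u' ≠ 0 :=
    mul_ne_zero (zpow_ne_zero _ hπ) hu'
  refine ⟨u * u'⁻¹, ?_⟩
  rw [div_eq_iff hd, Units.val_mul, map_mul]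
  have huu : algebraMap O F ↑u'⁻¹ * algebraMap O F ↑u' = 1 := by
    rw [← map_mul, Units.inv_mul, map_one]
  have hzz : (algebraMap O F ϖ) ^ (v - w) * (algebraMap O F ϖ) ^ w
      = (algebraMap O F ϖ) ^ v := by
    rw [← zpow_add₀ hπ, sub_add_cancel]
  calc (algebraMap O F ϖ) ^ v * algebraMap O F ↑u
      = (algebraMap O F ϖ) ^ (v - w) * (algebraMap O F ϖ) ^ w * algebraMap O F ↑u
          * (algebraMap O F ↑u'⁻¹ * algebraMap O F ↑u') := by rw [hzz, huu, mul_one]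
    _ = (algebraMap O F ϖ) ^ (v - w) * (algebraMap O F ↑u * algebraMap O F ↑u'⁻¹)
          * ((algebraMap O F ϖ) ^ w * algebraMap O F ↑u') := by ring

theorem exists_hasValInt {ϖ : O} (hϖ : Irreducible ϖ) {c : F} (hc : c ≠ 0) :
    ∃ v : ℤ, HasValInt ϖ c v := by
  have inj := IsFractionRing.injective O F
  have hπ : algebraMap O F ϖ ≠ 0 := fun h =>
    hϖ.ne_zero (inj (by rw [h, map_zero]))
  obtain ⟨p, q, hq, rfl⟩ := IsFractionRing.div_surjective (A := O) c
  have hq0 : q ≠ 0 := nonZeroDivisors.ne_zero hq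
  have hp0 : p ≠ 0 := by
    rintro rfl
    simp at hc
  obtain ⟨mp, up, hup⟩ := IsDiscreteValuationRing.eq_unit_mul_pow_irreducible hp0 hϖ
  obtain ⟨mq, uq, huq⟩ := IsDiscreteValuationRing.eq_unit_mul_pow_irreducible hq0 hϖ
  have hcp : HasValInt ϖ (algebraMap O F p) (mp : ℤ) :=
    ⟨up, by rw [hup, map_mul, map_pow, zpow_natCast, mul_comm]⟩
  have hcq : HasValInt ϖ (algebraMap O F q) (mq : ℤ) :=
    ⟨uq, by rw [huq, map_mul, map_pow, zpow_natCast, mul_comm]⟩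
  exact ⟨_, hasValInt_div hπ hcp hcq⟩

end DVR

section Herm

variable {σ : F ≃+* F} {B : V → V → F}

theorem hermSumLeft (hB : IsHermitianForm σ B) {ι : Type*} (s : Finset ι)
    (g : ι → V) (z : V) : B (∑ i ∈ s, g i) z = ∑ i ∈ s, B (g i) z := by
  classical
  induction s using Finset.induction_on with
  | empty => simpa using hB.zero_left z
  | insert _ _ hni ih =>
      rename_i i s
      rw [Finset.sum_insert hni, Finset.sum_insert hni, hB.add_left, ih]

theorem hermSubLeft (hB : IsHermitianForm σ B) (p q z : V) :
    B (p - q) z = B p z - B q z := by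
  have hneg : B (-q) z = -B q z := by
    rw [show -q = (-1 : F) • q by rw [neg_one_smul], hB.smul_left]; ring
  rw [sub_eq_add_neg, hB.add_left, hneg, sub_eq_add_neg]

theorem hermZeroRight (hB : IsHermitianForm σ B) (y : V) : B y 0 = 0 := by
  rw [hB.conj_symm, hB.zero_left, map_zero]

/-- Gram matrix of a family of vectors. -/
def gram (B : V → V → F) {n : ℕ} (f : Fin n → V) : Matrix (Fin n) (Fin n) F :=
  Matrix.of fun i j => B (f i) (f j)

theorem gram_transform (hB : IsHermitianForm σ B) (hσ2 : ∀ c : F, σ (σ c) = c) {n : ℕ}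
    (f g : Fin n → V) (M : Matrix (Fin n) (Fin n) F) (h : ∀ i, f i = ∑ k, M i k • g k) :
    gram B f = M * gram B g * Matrix.of (fun l j => σ (M j l)) := by
  ext i j
  have hright : ∀ k, B (g k) (f j) = ∑ l, σ (M j l) * B (g k) (g l) := by
    intro k
    rw [hB.conj_symm (g k) (f j), h j, hermSumLeft hB]
    rw [map_sum]
    refine Finset.sum_congr rfl fun l _ => ?_
    rw [hB.smul_left, map_mul]
    congr 1
    rw [hB.conj_symm (g l) (g k), hσ2]
  have hmain : B (f i) (f j) = ∑ k, ∑ l, M i k * (σ (M j l) * B (g k) (g l)) := by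
    rw [h i, hermSumLeft hB]
    refine Finset.sum_congr rfl fun k _ => ?_
    rw [hB.smul_left, hright k, Finset.mul_sum]
  show B (f i) (f j) = _
  rw [hmain]
  simp only [Matrix.mul_apply, Matrix.of_apply, gram, Finset.sum_mul, Finset.mul_sum]
  rw [Finset.sum_comm]
  refine Finset.sum_congr rfl fun l _ => Finset.sum_congr rfl fun k _ => ?_
  ring

theorem adjugate_mem_range {n : ℕ} (M : Matrix (Fin n) (Fin n) F)
    (h : ∀ i j, M i j ∈ (algebraMap O F).range) :
    ∀ i j, M.adjugate i j ∈ (algebraMap O F).range := by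
  have h' : ∀ i, ∀ j, ∃ b : O, algebraMap O F b = M i j := h
  choose P hP using h'
  have hM : M = (algebraMap O F).mapMatrix (Matrix.of P) := by
    ext i j
    simp [hP]
  rw [hM, ← RingHom.map_adjugate]
  intro i j
  exact ⟨_, rfl⟩

theorem adjCond_transfer (hB : IsHermitianForm σ B) (hσ2 : ∀ c : F, σ (σ c) = c)
    (hσO : ∀ c : O, σ (algebraMap O F c) ∈ (algebraMap O F).range)
    {n : ℕ} (g1 g2 : Fin n → V)
    (hsub : ∀ i, g1 i ∈ Submodule.span O (Set.range g2)) {ϖ : O} (m : ℤ)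
    (hg2 : ∀ k l, LeVal ϖ m ((gram B g2).adjugate k l)) :
    ∀ i j, LeVal ϖ m ((gram B g1).adjugate i j) := by
  have h' : ∀ i, ∃ p : Fin n → O, ∑ k, p k • g2 k = g1 i := fun i =>
    (Submodule.mem_span_range_iff_exists_fun O).1 (hsub i)
  choose P hP using h'
  set M : Matrix (Fin n) (Fin n) F := Matrix.of fun i k => algebraMap O F (P i k) with hMdef
  have hdec : ∀ i, g1 i = ∑ k, M i k • g2 k := by
    intro i
    rw [← hP i]
    refine Finset.sum_congr rfl fun k _ => ?_
    rw [hMdef]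
    simp [algebraMap_smul]
  have hG := gram_transform hB hσ2 g1 g2 M hdec
  set N : Matrix (Fin n) (Fin n) F := Matrix.of fun l j => σ (M j l) with hNdef
  have hMr : ∀ i j, M i j ∈ (algebraMap O F).range := fun i j => ⟨P i j, rfl⟩
  have hNr : ∀ i j, N i j ∈ (algebraMap O F).range := fun i j => hσO (P j i)
  have hMa := adjugate_mem_range (O := O) M hMr
  have hNa := adjugate_mem_range (O := O) N hNr
  intro i j
  rw [hG, Matrix.adjugate_mul_distrib, Matrix.adjugate_mul_distrib]
  rw [Matrix.mul_apply]
  refine leVal_sum _ _ fun l _ => ?_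
  refine leVal_mem_mul (hNa i l) ?_
  rw [Matrix.mul_apply]
  refine leVal_sum _ _ fun k _ => ?_
  exact leVal_mul_mem (hg2 l k) (hMa k j)

end Herm

section FinsetFacts

theorem erase_last_eq (n : ℕ) :
    (Finset.univ : Finset (Fin (n + 1))).erase (Fin.last n)
      = Finset.image Fin.castSucc Finset.univ := by
  ext l
  constructor
  · intro hl
    have h1 : l ≠ Fin.last n := (Finset.mem_erase.1 hl).1
    obtain ⟨y, rfl⟩ := Fin.exists_castSucc_eq.2 h1
    exact Finset.mem_image.2 ⟨y, Finset.mem_univ y, rfl⟩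
  · intro hl
    obtain ⟨y, -, rfl⟩ := Finset.mem_image.1 hl
    exact Finset.mem_erase.2 ⟨(Fin.castSucc_lt_last y).ne, Finset.mem_univ _⟩

theorem erase_castSucc_erase_last (n : ℕ) (i0 : Fin n) :
    ((Finset.univ : Finset (Fin (n + 1))).erase i0.castSucc).erase (Fin.last n)
      = Finset.image Fin.castSucc (Finset.univ.erase i0) := by
  ext l
  constructor
  · intro hl
    have h1 : l ≠ Fin.last n := (Finset.mem_erase.1 hl).1
    have h2 : l ≠ i0.castSucc := (Finset.mem_erase.1 (Finset.mem_erase.1 hl).2).1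
    obtain ⟨y, rfl⟩ := Fin.exists_castSucc_eq.2 h1
    exact Finset.mem_image.2
      ⟨y, Finset.mem_erase.2 ⟨fun h => h2 (by rw [h]), Finset.mem_univ y⟩, rfl⟩
  · intro hl
    obtain ⟨y, hy, rfl⟩ := Finset.mem_image.1 hl
    have hy1 := (Finset.mem_erase.1 hy).1
    refine Finset.mem_erase.2
      ⟨(Fin.castSucc_lt_last y).ne, Finset.mem_erase.2 ⟨?_, Finset.mem_univ _⟩⟩
    exact fun h => hy1 (Fin.castSucc_injective n h)

end FinsetFacts

end Statement16

open Statement16 in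
/-- for an integral lattice `L^♭` of rank `n−1` with fundamental invariants
`(a_1,…,a_{n−1})` and `x ∈ V ∖ L^♭_F`, letting `(a'_1,…,a'_n)` be the fundamental
invariants of `L^♭ + ⟨x⟩`, one has `a'_1 + ⋯ + a'_{n−1} ≥ a_1 + ⋯ + a_{n−1}` iff
`x ∈ M(L^♭) = L^♭ ⊕ {y ⊥ L^♭ : val(y) ≥ a_{n−1}}`. -/
theorem invariants_sum_ineq_iff_mem
    (σ : F ≃+* F) (hσ2 : ∀ c : F, σ (σ c) = c)
    (hσO : ∀ c : O, σ (algebraMap O F c) ∈ (algebraMap O F).range)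
    (B : V → V → F) (hB : IsHermitianForm σ B)
    (hBnd : ∀ x : V, (∀ y : V, B x y = 0) → x = 0)
    (q : ℕ) (hq1 : 1 < q) (hqodd : Odd q) (ϖ : O) (hϖ : Irreducible ϖ)
    (hres : Nat.card (O ⧸ Ideal.span {ϖ}) = q ^ 2)
    (hσϖ : σ (algebraMap O F ϖ) = algebraMap O F ϖ)
    [FiniteDimensional F V] (r : ℕ) (hdim : Module.finrank F V = r + 2)
    (Lb : Submodule O V)
    (e : Fin (r + 1) → V) (a : Fin (r + 1) → ℕ)
    (hspan : Submodule.span O (Set.range e) = Lb) (hli : LinearIndependent F e)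
    (ha : Monotone a)
    (horth : ∀ i j, i ≠ j → B (e i) (e j) = 0)
    (hvale : ∀ i, HasValNat ϖ (B (e i) (e i)) (a i))
    (x : V) (hx : x ∉ Submodule.span F (Lb : Set V))
    (e' : Fin (r + 2) → V) (a' : Fin (r + 2) → ℤ)
    (hspan' : Submodule.span O (Set.range e') = Lb ⊔ Submodule.span O {x})
    (hli' : LinearIndependent F e')
    (ha' : Monotone a')
    (horth' : ∀ i j, i ≠ j → B (e' i) (e' j) = 0)
    (hvale' : ∀ i, HasValInt ϖ (B (e' i) (e' i)) (a' i)) :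
    ((∑ i : Fin (r + 1), (a i : ℤ)) ≤ ∑ i : Fin (r + 1), a' (Fin.castSucc i)) ↔
      ∃ l ∈ Lb, ∃ y : V, (∀ z ∈ Lb, B y z = 0) ∧
        (y = 0 ∨ ∃ w : ℤ, (a (Fin.last r) : ℤ) ≤ w ∧ HasValInt ϖ (B y y) w) ∧
        x = l + y := by
  classical
  have inj := IsFractionRing.injective O F
  have hπ : algebraMap O F ϖ ≠ 0 := fun h => hϖ.ne_zero (inj (by rw [h, map_zero]))
  set lr : Fin (r + 1) := Fin.last r with hlr
  set la : Fin (r + 2) := Fin.last (r + 1) with hla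
  set m : ℤ := ∑ i : Fin (r + 1), (a i : ℤ) with hmdef
  set d : Fin (r + 1) → F := fun i => B (e i) (e i) with hddef
  have hd : ∀ i, HasValInt ϖ (d i) ((a i : ℤ)) := fun i => hasValNat_hasValInt (hvale i)
  have hd0 : ∀ i, d i ≠ 0 := fun i => hasValInt_ne_zero hπ (hd i)
  set cf : Fin (r + 1) → F := fun j => B x (e j) / d j with hcfdef
  set yv : V := x - ∑ j, cf j • e j with hyvdef
  set bF : F := B yv yv with hbFdef
  -- basic membership facts
  have heLb : ∀ j, e j ∈ Lb := fun j => by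
    rw [← hspan]; exact Submodule.subset_span ⟨j, rfl⟩
  -- orthogonality of yv
  have hye : ∀ j, B yv (e j) = 0 := by
    intro j
    rw [hyvdef, hermSubLeft hB, hermSumLeft hB]
    rw [Finset.sum_eq_single j
      (fun i _ hij => by rw [hB.smul_left, horth i j hij, mul_zero])
      (fun h => absurd (Finset.mem_univ j) h)]
    rw [hB.smul_left, hcfdef]
    simp only
    rw [div_mul_cancel₀ _ (hd0 j), sub_self]
  have hey : ∀ j, B (e j) yv = 0 := fun j => by
    rw [hB.conj_symm, hye j, map_zero]
  have hzy : ∀ z ∈ Submodule.span O (Set.range e), B z yv = 0 := by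
    intro z hz
    induction hz using Submodule.span_induction with
    | mem w hw => obtain ⟨j, rfl⟩ := hw; exact hey j
    | zero => exact hB.zero_left yv
    | add p w hp hw ihp ihw => rw [hB.add_left, ihp, ihw, add_zero]
    | smul o z hz ihz => rw [← algebraMap_smul F o z, hB.smul_left, ihz, mul_zero]
  have hyLb : ∀ z ∈ Lb, B yv z = 0 := by
    intro z hz
    rw [hB.conj_symm, hzy z (by rwa [hspan]), map_zero]
  -- the families
  set ff : Fin (r + 2) → V := Fin.snoc e x with hffdef
  set hh : Fin (r + 2) → V := Fin.snoc e yv with hhhdef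
  set cc : Fin (r + 2) → F := Fin.snoc cf 0 with hccdef
  set dd : Fin (r + 2) → F := Fin.snoc d bF with hdddef
  have hcc_last : cc la = 0 := by rw [hccdef, hla]; exact Fin.snoc_last _ _
  have hcc_cast : ∀ j, cc j.castSucc = cf j := fun j => by
    rw [hccdef]; exact Fin.snoc_castSucc _ _ _
  have hdd_last : dd la = bF := by rw [hdddef, hla]; exact Fin.snoc_last _ _
  have hdd_cast : ∀ j, dd j.castSucc = d j := fun j => by
    rw [hdddef]; exact Fin.snoc_castSucc _ _ _
  have hcsla : ∀ j : Fin (r + 1), j.castSucc ≠ la := fun j => (Fin.castSucc_lt_last j).ne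
  -- spanning facts
  have hspF : Submodule.span F (Lb : Set V) = Submodule.span F (Set.range e) := by
    rw [← hspan, Submodule.span_span_of_tower]
  have hx' : x ∉ Submodule.span F (Set.range e) := by rw [← hspF]; exact hx
  have hffli : LinearIndependent F ff := linearIndependent_fin_snoc.2 ⟨hli, hx'⟩
  have hffspanV : Submodule.span F (Set.range ff) = ⊤ :=
    hffli.span_eq_top_of_card_eq_finrank (by rw [Fintype.card_fin, hdim])
  have hrange_ff : Set.range ff = Set.range e ∪ {x} := by
    apply Set.eq_of_subset_of_subset
    · rintro _ ⟨i, rfl⟩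
      refine Fin.lastCases ?_ ?_ i
      · right; rw [hffdef]; simp [Fin.snoc_last]
      · intro i0; left; rw [hffdef]; exact ⟨i0, by simp [Fin.snoc_castSucc]⟩
    · rintro v (⟨i, rfl⟩ | rfl)
      · exact ⟨i.castSucc, by rw [hffdef]; exact Fin.snoc_castSucc _ _ _⟩
      · exact ⟨la, by rw [hffdef, hla]; exact Fin.snoc_last _ _⟩
  have hspanff : Submodule.span O (Set.range ff) = Lb ⊔ Submodule.span O {x} := by
    rw [hrange_ff, Submodule.span_union, hspan]
  have hspanfe' : Submodule.span O (Set.range e') = Submodule.span O (Set.range ff) := by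
    rw [hspan', hspanff]
  have he'f : ∀ i, e' i ∈ Submodule.span O (Set.range ff) := fun i => by
    rw [← hspanfe']; exact Submodule.subset_span ⟨i, rfl⟩
  have hfe' : ∀ i, ff i ∈ Submodule.span O (Set.range e') := fun i => by
    rw [hspanfe']; exact Submodule.subset_span ⟨i, rfl⟩
  -- the transition matrices
  set T : Matrix (Fin (r + 2)) (Fin (r + 2)) F :=
    Matrix.of fun i k => (if i = k then (1 : F) else 0) + (if i = la then cc k else 0) with hTdef
  set S : Matrix (Fin (r + 2)) (Fin (r + 2)) F :=
    Matrix.of fun k j => (if k = j then (1 : F) else 0) + (if k = la then -(cc j) else 0)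
    with hSdef
  have hT_apply : ∀ i k, T i k
      = (if i = k then (1 : F) else 0) + (if i = la then cc k else 0) := fun i k => rfl
  have hS_apply : ∀ k j, S k j
      = (if k = j then (1 : F) else 0) + (if k = la then -(cc j) else 0) := fun k j => rfl
  have hTS : T * S = 1 := by
    ext i j
    rw [Matrix.mul_apply, Matrix.one_apply]
    have hSsum : ∑ k, cc k * S k j = cc j := by
      have h2 : ∀ k, cc k * S k j
          = (if k = j then cc k else 0) + (if k = la then cc k * -(cc j) else 0) := by
        intro k
        rw [hS_apply, mul_add, mul_ite, mul_one, mul_zero, mul_ite, mul_zero]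
      rw [Finset.sum_congr rfl fun k _ => h2 k, Finset.sum_add_distrib,
        Finset.sum_ite_eq', if_pos (Finset.mem_univ j),
        Finset.sum_ite_eq', if_pos (Finset.mem_univ la), hcc_last, zero_mul, add_zero]
    by_cases hi : i = la
    · have hterm : ∀ k, T i k * S k j = (if i = k then S k j else 0) + cc k * S k j := by
        intro k
        rw [hT_apply, if_pos hi, add_mul, ite_mul, one_mul, zero_mul]
      rw [Finset.sum_congr rfl fun k _ => hterm k, Finset.sum_add_distrib,
        Finset.sum_ite_eq, if_pos (Finset.mem_univ i), hSsum, hS_apply, hi]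
      rw [if_pos rfl]
      ring
    · have hterm : ∀ k, T i k * S k j = (if i = k then S k j else 0) := by
        intro k
        rw [hT_apply, if_neg hi, add_zero, ite_mul, one_mul, zero_mul]
      rw [Finset.sum_congr rfl fun k _ => hterm k, Finset.sum_ite_eq,
        if_pos (Finset.mem_univ i), hS_apply, if_neg hi, add_zero]
  have hdetT : T.det = 1 := by
    have hTlower : T.BlockTriangular OrderDual.toDual := by
      intro i j hlt
      have h1 : i < j := hlt
      have h2 : i ≠ la := fun h => absurd h1 (not_lt.2 (h ▸ Fin.le_last j))
      rw [hT_apply, if_neg (ne_of_lt h1), if_neg h2, add_zero]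
    rw [Matrix.det_of_lowerTriangular T hTlower]
    refine Finset.prod_eq_one fun i _ => ?_
    by_cases hi : i = la
    · rw [hT_apply, if_pos rfl, if_pos hi, hi, hcc_last, add_zero]
    · rw [hT_apply, if_pos rfl, if_neg hi, add_zero]
  have hadjT : T.adjugate = S := by
    calc T.adjugate = T.adjugate * (T * S) := by rw [hTS, Matrix.mul_one]
    _ = (T.adjugate * T) * S := (Matrix.mul_assoc _ _ _).symm
    _ = S := by rw [Matrix.adjugate_mul, hdetT, one_smul, Matrix.one_mul]
  -- decomposition of ff in terms of hh
  have hffh : ∀ i, ff i = ∑ k, T i k • hh k := by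
    intro i
    refine Fin.lastCases ?_ ?_ i
    · have h1 : ∀ k, T la k • hh k = (if la = k then (1:F) else 0) • hh k + cc k • hh k := by
        intro k
        rw [hT_apply, if_pos rfl, add_smul]
      rw [Finset.sum_congr rfl fun k _ => h1 k]
      rw [Finset.sum_add_distrib]
      have h2 : ∀ k, (if la = k then (1:F) else 0) • hh k
          = (if la = k then hh k else 0) := by
        intro k; rw [ite_smul, one_smul, zero_smul]
      simp only [h2]
      rw [Finset.sum_ite_eq, if_pos (Finset.mem_univ la)]
      have h3 : (∑ k, cc k • hh k) = ∑ j : Fin (r + 1), cf j • e j := by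
        rw [Fin.sum_univ_castSucc]
        have h4 : ∀ j : Fin (r + 1), cc j.castSucc • hh j.castSucc = cf j • e j := by
          intro j
          rw [hcc_cast, hhhdef]
          congr 1
          exact Fin.snoc_castSucc _ _ _
        rw [Finset.sum_congr rfl fun j _ => h4 j]
        rw [show cc (Fin.last (r+1)) • hh (Fin.last (r+1)) = 0 by
          rw [← hla, hcc_last, zero_smul], add_zero]
      rw [h3]
      have h5 : hh la = yv := by rw [hhhdef, hla]; exact Fin.snoc_last _ _
      have h6 : ff la = x := by rw [hffdef, hla]; exact Fin.snoc_last _ _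
      rw [h5, h6, hyvdef]
      abel
    · intro i0
      have h1 : ∀ k, T i0.castSucc k • hh k = (if i0.castSucc = k then hh k else 0) := by
        intro k
        rw [hT_apply, if_neg (hcsla i0), add_zero, ite_smul, one_smul, zero_smul]
      simp only [h1]
      rw [Finset.sum_ite_eq, if_pos (Finset.mem_univ _)]
      rw [hffdef, hhhdef]
      rw [Fin.snoc_castSucc, Fin.snoc_castSucc]
  -- Gram matrix of hh is diagonal
  have hgram_hh : gram B hh = Matrix.diagonal dd := by
    ext i j
    rw [Matrix.diagonal_apply]
    by_cases hij : i = j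
    · subst hij
      rw [if_pos rfl]
      refine Fin.lastCases ?_ ?_ i
      · show B (hh la) (hh la) = dd la
        rw [hdd_last, hhhdef, hla, Fin.snoc_last, hbFdef]
      · intro i0
        show B (hh i0.castSucc) (hh i0.castSucc) = dd i0.castSucc
        rw [hdd_cast, hhhdef, Fin.snoc_castSucc, hddef]
    · rw [if_neg hij]
      have key : ∀ p q : Fin (r + 2), p ≠ q → B (hh p) (hh q) = 0 := by
        intro p q hpq
        revert hpq
        refine Fin.lastCases ?_ ?_ p
        · refine Fin.lastCases ?_ ?_ q
          · intro h; exact absurd rfl h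
          · intro q0 h
            show B (hh la) (hh q0.castSucc) = 0
            rw [hhhdef, hla, Fin.snoc_last, Fin.snoc_castSucc]
            exact hye q0
        · intro p0
          refine Fin.lastCases ?_ ?_ q
          · intro h
            show B (hh p0.castSucc) (hh la) = 0
            rw [hhhdef, hla, Fin.snoc_last, Fin.snoc_castSucc]
            exact hey p0
          · intro q0 h
            show B (hh p0.castSucc) (hh q0.castSucc) = 0
            rw [hhhdef, Fin.snoc_castSucc, Fin.snoc_castSucc]
            exact horth p0 q0 (fun hpq0 => h (by rw [hpq0]))
      exact key i j hij
  -- Gram matrix of ff and its adjugate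
  set N : Matrix (Fin (r + 2)) (Fin (r + 2)) F := Matrix.of fun l j => σ (T j l) with hNdef
  have hgram_ff : gram B ff = T * Matrix.diagonal dd * N := by
    rw [← hgram_hh]
    exact gram_transform hB hσ2 ff hh T hffh
  have hadjN : N.adjugate = Matrix.of fun i k => σ (S k i) := by
    have hNeq : N = (σ : F →+* F).mapMatrix T.transpose := by
      ext l j
      rfl
    rw [hNeq, ← RingHom.map_adjugate, ← Matrix.adjugate_transpose, hadjT]
    ext i k
    rfl
  set D : Fin (r + 2) → F := fun k => ∏ l ∈ Finset.univ.erase k, dd l with hDdef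
  have hadj_entry : ∀ i j, (gram B ff).adjugate i j
      = D i * S i j + (-(σ (cc i))) * (D la * S la j) := by
    intro i j
    rw [hgram_ff, Matrix.adjugate_mul_distrib, Matrix.adjugate_mul_distrib, hadjN, hadjT,
      Matrix.adjugate_diagonal]
    rw [Matrix.mul_apply]
    have hterm : ∀ k, (Matrix.of fun i k => σ (S k i)) i k
        * ((Matrix.diagonal fun i => ∏ j ∈ Finset.univ.erase i, dd j) * S) k j
        = (if k = i then D k * S k j else 0)
          + (if k = la then -(σ (cc i)) * (D k * S k j) else 0) := by
      intro k
      rw [Matrix.diagonal_mul]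
      have hσS : σ (S k i) = (if k = i then (1 : F) else 0)
          + (if k = la then -(σ (cc i)) else 0) := by
        rw [hS_apply, map_add, apply_ite σ, apply_ite σ, map_one, map_zero, map_neg]
      show σ (S k i) * ((∏ j ∈ Finset.univ.erase k, dd j) * S k j) = _
      have hDk : (∏ j ∈ Finset.univ.erase k, dd j) = D k := rfl
      rw [hσS, add_mul, ite_mul, ite_mul, one_mul, zero_mul, hDk]
    rw [Finset.sum_congr rfl fun k _ => hterm k, Finset.sum_add_distrib,
      Finset.sum_ite_eq', if_pos (Finset.mem_univ i),
      Finset.sum_ite_eq', if_pos (Finset.mem_univ la)]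
  -- evaluations of S
  have hS_la_cast : ∀ j0 : Fin (r + 1), S la j0.castSucc = -(cf j0) := by
    intro j0
    rw [hS_apply, if_neg (fun h => hcsla j0 h.symm), if_pos rfl, hcc_cast, zero_add]
  have hS_cast_cast_eq : ∀ i0 : Fin (r + 1), S i0.castSucc i0.castSucc = 1 := by
    intro i0
    rw [hS_apply, if_pos rfl, if_neg (hcsla i0), add_zero]
  -- valuations of the cofactors D
  have hDlast : HasValInt ϖ (D la) m := by
    have h1 : D la = ∏ i : Fin (r + 1), d i := by
      have h0 : D la = ∏ l ∈ Finset.univ.erase la, dd l := rfl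
      rw [h0, hla, erase_last_eq,
        Finset.prod_image (fun p _ q _ hpq => Fin.castSucc_injective _ hpq)]
      exact Finset.prod_congr rfl fun i _ => hdd_cast i
    rw [h1, hmdef]
    exact hasValInt_prod hπ _ _ _ fun i _ => hd i
  have hDcast : ∀ i0 : Fin (r + 1), D i0.castSucc = bF * ∏ l ∈ Finset.univ.erase i0, d l := by
    intro i0
    have h0 : D i0.castSucc = ∏ l ∈ Finset.univ.erase i0.castSucc, dd l := rfl
    have hmem : la ∈ Finset.univ.erase i0.castSucc :=
      Finset.mem_erase.2 ⟨fun hc => (hcsla i0) hc.symm, Finset.mem_univ _⟩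
    rw [h0, ← Finset.mul_prod_erase _ dd hmem, hdd_last]
    congr 1
    rw [hla, erase_castSucc_erase_last,
      Finset.prod_image (fun p _ q _ hpq => Fin.castSucc_injective _ hpq)]
    exact Finset.prod_congr rfl fun l _ => hdd_cast l
  have hprod_er : ∀ i0 : Fin (r + 1), HasValInt ϖ (∏ l ∈ Finset.univ.erase i0, d l)
      (∑ l ∈ Finset.univ.erase i0, (a l : ℤ)) :=
    fun i0 => hasValInt_prod hπ _ _ _ fun l _ => hd l
  have hsum_er : ∀ i0 : Fin (r + 1), (∑ l ∈ Finset.univ.erase i0, (a l : ℤ)) + (a i0 : ℤ) = m :=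
    fun i0 => by rw [hmdef]; exact Finset.sum_erase_add _ _ (Finset.mem_univ i0)
  -- the e' side
  set d' : Fin (r + 2) → F := fun i => B (e' i) (e' i) with hd'def
  have hd' : ∀ i, HasValInt ϖ (d' i) (a' i) := hvale'
  have hgram_e' : gram B e' = Matrix.diagonal d' := by
    ext i j
    rw [Matrix.diagonal_apply]
    by_cases hij : i = j
    · subst hij; rw [if_pos rfl]; rfl
    · rw [if_neg hij]; exact horth' i j hij
  have hstep2 : (∀ i j, LeVal ϖ m ((gram B e').adjugate i j))
      ↔ (m ≤ ∑ i : Fin (r + 1), a' i.castSucc) := by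
    rw [hgram_e', Matrix.adjugate_diagonal]
    constructor
    · intro hAC
      have h1 := hAC la la
      rw [Matrix.diagonal_apply_eq] at h1
      have h2 : HasValInt ϖ (∏ l ∈ Finset.univ.erase la, d' l)
          (∑ i : Fin (r + 1), a' i.castSucc) := by
        rw [hla, erase_last_eq,
          Finset.prod_image (fun p _ q _ hpq => Fin.castSucc_injective _ hpq)]
        exact hasValInt_prod hπ _ _ _ fun i _ => hd' i.castSucc
      exact le_of_leVal hπ inj hϖ h1 h2
    · intro hle i j
      by_cases hij : i = j
      · subst hij
        rw [Matrix.diagonal_apply_eq]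
        have h2 : HasValInt ϖ (∏ l ∈ Finset.univ.erase i, d' l)
            (∑ l ∈ Finset.univ.erase i, a' l) :=
          hasValInt_prod hπ _ _ _ fun l _ => hd' l
        refine leVal_mono hπ ?_ (hasValInt_leVal h2)
        have e1 : (∑ l ∈ Finset.univ.erase i, a' l) + a' i = ∑ l, a' l :=
          Finset.sum_erase_add _ _ (Finset.mem_univ i)
        have e2 : (∑ l, a' l) = (∑ i0 : Fin (r + 1), a' i0.castSucc) + a' la :=
          Fin.sum_univ_castSucc a'
        have e3 : a' i ≤ a' la := ha' (Fin.le_last i)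
        omega
      · rw [Matrix.diagonal_apply_ne _ hij]
        exact leVal_zero ϖ m
  have hstep1 : (∀ i j, LeVal ϖ m ((gram B e').adjugate i j))
      ↔ (∀ i j, LeVal ϖ m ((gram B ff).adjugate i j)) :=
    ⟨fun h => adjCond_transfer hB hσ2 hσO ff e' hfe' m h,
     fun h => adjCond_transfer hB hσ2 hσO e' ff he'f m h⟩
  -- claim A
  have claimA : (∀ i j, LeVal ϖ m ((gram B ff).adjugate i j)) →
      (∀ j0 : Fin (r + 1), cf j0 ∈ (algebraMap O F).range)
        ∧ LeVal ϖ ((a lr : ℤ)) bF := by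
    intro hAC
    have hσla : σ (cc la) = 0 := by rw [hcc_last, map_zero]
    have hc_mem : ∀ j0 : Fin (r + 1), cf j0 ∈ (algebraMap O F).range := by
      intro j0
      have h1 := hAC la j0.castSucc
      rw [hadj_entry, hσla, neg_zero, zero_mul, add_zero, hS_la_cast] at h1
      have h2 := leVal_neg h1
      rw [mul_neg, neg_neg] at h2
      have h3 : LeVal ϖ (m + 0) (D la * cf j0) := by rwa [add_zero]
      exact leVal_zero_mem (leVal_cancel hπ hDlast h3)
    refine ⟨hc_mem, ?_⟩
    have h1 := hAC lr.castSucc lr.castSucc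
    rw [hadj_entry, hS_cast_cast_eq, mul_one, hS_la_cast, hcc_cast] at h1
    have ht2 : LeVal ϖ m (-(σ (cf lr)) * (D la * -(cf lr))) := by
      obtain ⟨b1, hb1⟩ := hc_mem lr
      have hs1 : -(σ (cf lr)) ∈ (algebraMap O F).range := by
        rw [← hb1]
        exact Subring.neg_mem _ (hσO b1)
      exact leVal_mem_mul hs1 (leVal_mul_mem (hasValInt_leVal hDlast)
        (Subring.neg_mem _ ⟨b1, hb1⟩))
    have h2 : LeVal ϖ m (D lr.castSucc) := by
      have h3 := leVal_add h1 (leVal_neg ht2)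
      rwa [add_neg_cancel_right] at h3
    rw [hDcast lr] at h2
    have h4 : LeVal ϖ ((∑ l ∈ Finset.univ.erase lr, (a l : ℤ)) + (a lr : ℤ))
        ((∏ l ∈ Finset.univ.erase lr, d l) * bF) := by
      rw [hsum_er lr, mul_comm]
      exact h2
    exact leVal_cancel hπ (hprod_er lr) h4
  -- claim B
  have hxs : x = yv + ∑ j, cf j • e j := by rw [hyvdef]; abel
  have claimB : ((∀ j0 : Fin (r + 1), cf j0 ∈ (algebraMap O F).range)
        ∧ LeVal ϖ ((a lr : ℤ)) bF) →
      ∃ l ∈ Lb, ∃ y : V, (∀ z ∈ Lb, B y z = 0) ∧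
        (y = 0 ∨ ∃ w : ℤ, (a (Fin.last r) : ℤ) ≤ w ∧ HasValInt ϖ (B y y) w) ∧
        x = l + y := by
    rintro ⟨hc_mem, hβle⟩
    choose bo hbo using hc_mem
    have hbo' : ∀ j, (bo j : O) • e j = cf j • e j := by
      intro j
      rw [← hbo j, algebraMap_smul]
    refine ⟨∑ j, bo j • e j, ?_, yv, hyLb, ?_, ?_⟩
    · rw [← hspan]
      exact Submodule.sum_mem _ fun j _ =>
        Submodule.smul_mem _ _ (Submodule.subset_span ⟨j, rfl⟩)
    · by_cases hy0 : yv = 0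
      · exact Or.inl hy0
      · right
        have hbF0 : bF ≠ 0 := by
          intro hbF0
          refine hy0 (hBnd yv ?_)
          have hall : ∀ z : V, B z yv = 0 := by
            intro z
            have hz : z ∈ Submodule.span F (Set.range ff) := by rw [hffspanV]; trivial
            induction hz using Submodule.span_induction with
            | mem w hw =>
                obtain ⟨i, rfl⟩ := hw
                refine Fin.lastCases ?_ ?_ i
                · show B (ff (Fin.last (r + 1))) yv = 0
                  have hffla : ff (Fin.last (r + 1)) = x := by
                    rw [hffdef]; exact Fin.snoc_last _ _
                  rw [hffla, hxs, hB.add_left, hermSumLeft hB]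
                  rw [show B yv yv = 0 from hbF0]
                  rw [Finset.sum_congr rfl fun j _ => by
                    rw [hB.smul_left, hey j, mul_zero]]
                  rw [Finset.sum_const_zero, add_zero]
                · intro i0
                  show B (ff i0.castSucc) yv = 0
                  have hffc : ff i0.castSucc = e i0 := by
                    rw [hffdef]; exact Fin.snoc_castSucc _ _ _
                  rw [hffc]
                  exact hey i0
            | zero => exact hB.zero_left yv
            | add p w hp hw ihp ihw => rw [hB.add_left, ihp, ihw, add_zero]
            | smul t z hz ihz => rw [hB.smul_left, ihz, mul_zero]
          intro z
          rw [hB.conj_symm, hall z, map_zero]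
        obtain ⟨w, hw⟩ := exists_hasValInt hϖ hbF0
        exact ⟨w, le_of_leVal hπ inj hϖ hβle hw, hw⟩
    · have hsum_eq : (∑ j, bo j • e j : V) = ∑ j, cf j • e j :=
        Finset.sum_congr rfl fun j _ => hbo' j
      rw [hsum_eq, hyvdef]
      abel
  -- claim C
  have claimC : (∃ l ∈ Lb, ∃ y : V, (∀ z ∈ Lb, B y z = 0) ∧
        (y = 0 ∨ ∃ w : ℤ, (a (Fin.last r) : ℤ) ≤ w ∧ HasValInt ϖ (B y y) w) ∧
        x = l + y) →
      ((∀ j0 : Fin (r + 1), cf j0 ∈ (algebraMap O F).range)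
        ∧ LeVal ϖ ((a lr : ℤ)) bF) := by
    rintro ⟨l, hlLb, y', hy'perp, hdisj, hxeq⟩
    have hlmem : l ∈ Submodule.span O (Set.range e) := by rwa [hspan]
    obtain ⟨bo, hbo⟩ := (Submodule.mem_span_range_iff_exists_fun O).1 hlmem
    have hcB : ∀ j, cf j = algebraMap O F (bo j) := by
      intro j
      have hBl : B l (e j) = algebraMap O F (bo j) * d j := by
        rw [← hbo, hermSumLeft hB]
        rw [Finset.sum_eq_single j
          (fun i _ hij => by rw [← algebraMap_smul F (bo i) (e i), hB.smul_left,
            horth i j hij, mul_zero])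
          (fun hj => absurd (Finset.mem_univ j) hj)]
        rw [← algebraMap_smul F (bo j) (e j), hB.smul_left]
      have hBx : B x (e j) = algebraMap O F (bo j) * d j := by
        rw [hxeq, hB.add_left, hy'perp (e j) (heLb j), add_zero, hBl]
      show B x (e j) / d j = _
      rw [hBx, mul_div_assoc, div_self (hd0 j), mul_one]
    have hc_mem : ∀ j, cf j ∈ (algebraMap O F).range := fun j => by
      rw [hcB j]; exact ⟨bo j, rfl⟩
    have hyy' : yv = y' := by
      have hsum_eq : (∑ j, cf j • e j : V) = l := by
        rw [← hbo]
        refine Finset.sum_congr rfl fun j _ => ?_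
        rw [hcB j, algebraMap_smul]
      rw [hyvdef, hsum_eq, hxeq]
      abel
    refine ⟨hc_mem, ?_⟩
    rcases hdisj with h0 | ⟨w, hw1, hw2⟩
    · have hz : bF = 0 := by rw [hbFdef, hyy', h0, hB.zero_left]
      rw [hz]
      exact leVal_zero ϖ _
    · have hz : bF = B y' y' := by rw [hbFdef, hyy']
      rw [hz]
      exact leVal_mono hπ hw1 (hasValInt_leVal hw2)
  -- claim D
  have claimD : ((∀ j0 : Fin (r + 1), cf j0 ∈ (algebraMap O F).range)
        ∧ LeVal ϖ ((a lr : ℤ)) bF) →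
      (∀ i j, LeVal ϖ m ((gram B ff).adjugate i j)) := by
    rintro ⟨hc_mem, hβle⟩ i j
    rw [hadj_entry]
    have hccr : ∀ k, cc k ∈ (algebraMap O F).range := by
      intro k
      refine Fin.lastCases ?_ ?_ k
      · rw [← hla, hcc_last]
        exact Subring.zero_mem _
      · intro j0
        rw [hcc_cast]
        exact hc_mem j0
    have hS_mem : ∀ k j', S k j' ∈ (algebraMap O F).range := by
      intro k j'
      rw [hS_apply]
      refine Subring.add_mem _ ?_ ?_
      · split
        · exact Subring.one_mem _
        · exact Subring.zero_mem _
      · split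
        · exact Subring.neg_mem _ (hccr j')
        · exact Subring.zero_mem _
    have hD_le : ∀ k, LeVal ϖ m (D k) := by
      intro k
      refine Fin.lastCases ?_ ?_ k
      · rw [← hla]
        exact hasValInt_leVal hDlast
      · intro i0
        rw [hDcast i0]
        have h1 : LeVal ϖ ((a i0 : ℤ)) bF :=
          leVal_mono hπ (by exact_mod_cast ha (Fin.le_last i0)) hβle
        have h2 := leVal_mul hπ h1 (hasValInt_leVal (hprod_er i0))
        rwa [show (a i0 : ℤ) + (∑ l ∈ Finset.univ.erase i0, (a l : ℤ)) = m by
          rw [← hsum_er i0]; ring] at h2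
    refine leVal_add ?_ ?_
    · exact leVal_mul_mem (hD_le i) (hS_mem i j)
    · refine leVal_mem_mul ?_ (leVal_mul_mem (hD_le la) (hS_mem la j))
      refine Subring.neg_mem _ ?_
      obtain ⟨bk, hbk⟩ := hccr i
      rw [← hbk]
      exact hσO bk
  constructor
  · intro hle
    exact claimB (claimA (hstep1.1 (hstep2.2 hle)))
  · intro hR
    exact hstep2.1 (hstep1.2 (claimD (claimC hR)))
end
end
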